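/- arXiv:1301.0282 — 6 statements merged into one kernel-verified Lean document; each statement's English description precedes it below -/
import Mathlib

section
/- Let G be a finite simple graph. Then there exists an orientation D of G such that every directed simple path in D has at most χ(G) vertices (equivalently, length at most χ(G) − 1). [Easy direction of the Gallai–Hasse–Roy–Vitaver theorem: orient each edge from the endpoint of larger color to the endpoint of smaller color in a proper coloring with colors 1, …, χ(G).] -/
/-- Easy direction of the Gallai–Hasse–Roy–Vitaver theorem: every finite simple
graph `G` admits an orientation in which every directed simple path has at most
`χ(G)` vertices. An orientation is given by a relation `r` such that `r u v`
implies adjacency and for each edge exactly one of the two directions holds;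
a directed simple path is a duplicate-free list chained by `r`. -/
theorem gallai_hasse_roy_vitaver_easy {V : Type} [Fintype V] (G : SimpleGraph V) :
    ∃ r : V → V → Prop,
      (∀ u v, r u v → G.Adj u v) ∧
      (∀ u v, G.Adj u v → Xor' (r u v) (r v u)) ∧
      (∀ l : List V, l.Nodup → l.Chain' r →
        (l.length : ℕ∞) ≤ G.chromaticNumber) := by
  set n := ENat.toNat G.chromaticNumber with hn
  obtain ⟨C⟩ := G.colorable_chromaticNumber_of_fintype
  have hχtop : G.chromaticNumber ≠ ⊤ := by
    rw [SimpleGraph.chromaticNumber_ne_top_iff_exists]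
    exact ⟨_, G.colorable_of_fintype⟩
  have hχ : (n : ℕ∞) = G.chromaticNumber := ENat.coe_toNat hχtop
  refine ⟨fun u v => G.Adj u v ∧ C v < C u, fun u v h => h.1, ?_, ?_⟩
  · intro u v h
    have hne : C u ≠ C v := C.valid h
    rcases lt_or_gt_of_ne hne with h1 | h1
    · exact Or.inr ⟨⟨h.symm, h1⟩, fun h2 => absurd h1 (not_lt.2 h2.2.le)⟩
    · exact Or.inl ⟨⟨h, h1⟩, fun h2 => absurd h1 (not_lt.2 h2.2.le)⟩
  · intro l _ hc
    have hc' : (l.map C).Chain' (· > ·) := by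
      rw [List.Chain', List.isChain_map]
      exact hc.imp (fun a b h => h.2)
    have hp : (l.map C).Pairwise (· > ·) :=
      (List.isChain_iff_pairwise).1 hc'
    have hnd : (l.map C).Nodup := hp.imp fun h => ne_of_gt h
    have hlen : l.length ≤ n := by
      have := hnd.length_le_card
      simpa using this
    rw [← hχ]
    exact_mod_cast hlen
end

section
/- Let G be a finite simple graph. Then for every orientation D of G there exists a directed simple path in D with at least χ(G) vertices (equivalently, of length at least χ(G) − 1). [Hard direction of the Gallai–Hasse–Roy–Vitaver theorem.] -/
open Relation

private lemma ghrv_decomp {α : Type} {rs : α → α → Prop} {u v a b : α}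
    (h : TransGen (fun x y => rs x y ∨ (x = u ∧ y = v)) a b) :
    TransGen rs a b ∨ (ReflTransGen rs a u ∧ ReflTransGen rs v b) := by
  induction h using TransGen.head_induction_on with
  | single h =>
    rcases h with h | ⟨rfl, rfl⟩
    · exact Or.inl (TransGen.single h)
    · exact Or.inr ⟨ReflTransGen.refl, ReflTransGen.refl⟩
  | head h₁ h₂ IH =>
    rcases h₁ with h₁ | ⟨rfl, rfl⟩
    · rcases IH with IH | ⟨IH1, IH2⟩
      · exact Or.inl (IH.head h₁)
      · exact Or.inr ⟨IH1.head h₁, IH2⟩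
    · rcases IH with IH | ⟨IH1, IH2⟩
      · exact Or.inr ⟨ReflTransGen.refl, IH.to_reflTransGen⟩
      · exact Or.inr ⟨ReflTransGen.refl, IH2⟩

/-- any member of a chain reaches the last element -/
private lemma ghrv_chain_last {α : Type} {rs : α → α → Prop} {l : List α}
    (hc : l.Chain' rs) {a u : α} (ha : a ∈ l) (hu : l.getLast? = some u) :
    ReflTransGen rs a u := by
  obtain ⟨l1, l2, rfl⟩ := List.append_of_mem ha
  have hsuf : (a :: l2).Chain' rs := hc.suffix ⟨l1, rfl⟩
  have hchain : List.Chain rs a l2 := hsuf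
  have hlast : (a :: l2).getLast? = some u := by
    rwa [List.getLast?_append_cons] at hu
  have hlast' : (a :: l2).getLast (List.cons_ne_nil _ _) = u := by
    rw [List.getLast?_eq_getLast_of_ne_nil (List.cons_ne_nil _ _)] at hlast
    exact Option.some_injective _ hlast
  exact List.relationReflTransGen_of_exists_isChain_cons l2 hchain hlast'

/-- Hard direction of the Gallai–Hasse–Roy–Vitaver theorem: in every
orientation of a finite simple graph `G` there is a directed simple path with
at least `χ(G)` vertices. An orientation is given by a relation `r` such that
`r u v` implies adjacency and for each edge exactly one of the two directions
holds; a directed simple path is a duplicate-free list chained by `r`. -/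
theorem gallai_hasse_roy_vitaver_hard {V : Type} [Fintype V] (G : SimpleGraph V)
    (r : V → V → Prop)
    (hr_sub : ∀ u v, r u v → G.Adj u v)
    (hr_orient : ∀ u v, G.Adj u v → Xor' (r u v) (r v u)) :
    ∃ l : List V, l.Nodup ∧ l.Chain' r ∧
      G.chromaticNumber ≤ (l.length : ℕ∞) := by
  classical
  cases isEmpty_or_nonempty V with
  | inl hV =>
    refine ⟨[], by simp, by simp [List.Chain'], ?_⟩
    have : G.Colorable 0 := ⟨⟨fun v => isEmptyElim v, fun {u} => isEmptyElim u⟩⟩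
    simpa using this.chromaticNumber_le
  | inr hV =>
    -- choose a maximal acyclic subset of the orientation's edges
    set P : Finset (V × V) → Prop :=
      fun s => (∀ p ∈ s, r p.1 p.2) ∧ ∀ x, ¬ TransGen (fun a b => (a, b) ∈ s) x x with hP
    have hPempty : P ∅ := by
      refine ⟨by simp, fun x h => ?_⟩
      cases h with
      | single h => simp at h
      | tail _ h => simp at h
    obtain ⟨s, hsmem, hsmax⟩ :=
      Finset.exists_max_image (Finset.univ.filter P) Finset.card
        ⟨∅, by simpa using hPempty⟩
    rw [Finset.mem_filter] at hsmem
    have hs : P s := hsmem.2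
    set rs : V → V → Prop := fun a b => (a, b) ∈ s with hrs
    have hacyc : ∀ x, ¬ TransGen rs x x := hs.2
    -- f v = longest rs-path ending at v (number of vertices)
    set Q : V → ℕ → Prop := fun v n =>
      ∃ l : List V, l.Nodup ∧ l.Chain' rs ∧ l.getLast? = some v ∧ l.length = n with hQ
    set f : V → ℕ := fun v => Nat.findGreatest (Q v) (Fintype.card V) with hf
    have hQ1 : ∀ v, Q v 1 := fun v => ⟨[v], by simp, by simp [List.Chain'], by simp, by simp⟩
    have hfpos : ∀ v, 1 ≤ f v := fun v =>
      Nat.le_findGreatest Fintype.card_pos (hQ1 v)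
    have hfspec : ∀ v, Q v (f v) := fun v =>
      Nat.findGreatest_spec Fintype.card_pos (hQ1 v)
    -- edges of s strictly increase f
    have hstep : ∀ u v, rs u v → f u < f v := by
      intro u v huv
      obtain ⟨l, hnd, hch, hlast, hlen⟩ := hfspec u
      have hvnot : v ∉ l := by
        intro hvl
        have h1 : ReflTransGen rs v u := ghrv_chain_last hch hvl hlast
        exact hacyc v (TransGen.tail' h1 huv)
      have hQv : Q v (f u + 1) := by
        refine ⟨l ++ [v], ?_, ?_, ?_, by simp [hlen]⟩
        · simp [List.nodup_append, hnd, hvnot]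
          exact fun a ha h => hvnot (h ▸ ha)
        · rw [List.Chain', List.isChain_append]
          refine ⟨hch, by simp, ?_⟩
          intro x hx y hy
          simp only [List.head?_cons, Option.mem_def, Option.some.injEq] at hy
          rw [hlast] at hx
          simp only [Option.mem_def, Option.some.injEq] at hx
          subst hx; subst hy; exact huv
        · simp
      have hcard : f u + 1 ≤ Fintype.card V := by
        obtain ⟨l', hnd', _, _, hlen'⟩ := hQv
        rw [← hlen']; exact hnd'.length_le_card
      exact Nat.lt_of_succ_le (Nat.le_findGreatest hcard hQv)
    have htrans : ∀ u v, TransGen rs u v → f u < f v := by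
      intro u v h
      induction h with
      | single h => exact hstep _ _ h
      | tail _ h ih => exact lt_trans ih (hstep _ _ h)
    -- for every r-edge not in s, there's an rs-path back
    have hback : ∀ u v, r u v → ¬ rs u v → TransGen rs v u := by
      intro u v huv hns
      have hne : v ≠ u := (hr_sub u v huv).ne'
      have hPins : ¬ P (insert (u, v) s) := by
        intro hPi
        have := hsmax _ (Finset.mem_filter.mpr ⟨Finset.mem_univ _, hPi⟩)
        rw [Finset.card_insert_of_notMem hns] at this
        omega
      have hsub : ∀ p ∈ insert (u, v) s, r p.1 p.2 := by
        intro p hp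
        rcases Finset.mem_insert.mp hp with rfl | hp
        · exact huv
        · exact hs.1 p hp
      have hcyc : ∃ x, TransGen (fun a b => (a, b) ∈ insert (u, v) s) x x := by
        by_contra hno
        push_neg at hno
        exact hPins ⟨hsub, hno⟩
      obtain ⟨x, hx⟩ := hcyc
      have hx' : TransGen (fun a b => rs a b ∨ (a = u ∧ b = v)) x x := by
        refine TransGen.mono ?_ x x hx
        intro a b hab
        rcases Finset.mem_insert.mp hab with h | h
        · exact Or.inr ⟨congrArg Prod.fst h, congrArg Prod.snd h⟩
        · exact Or.inl h
      rcases ghrv_decomp hx' with h | ⟨h1, h2⟩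
      · exact absurd h (hacyc x)
      · have hvu : ReflTransGen rs v u := h2.trans h1
        rcases hvu.cases_head with h | ⟨c, hc1, hc2⟩
        · exact absurd h hne
        · exact TransGen.head' hc1 hc2
    -- f separates adjacent vertices
    have hproper : ∀ u v, G.Adj u v → f u ≠ f v := by
      intro u v hadj
      have key : ∀ a b, r a b → f a ≠ f b := by
        intro a b hab
        by_cases hmem : rs a b
        · exact (hstep a b hmem).ne
        · exact (htrans _ _ (hback a b hab hmem)).ne'
      rcases hr_orient u v hadj with ⟨h, _⟩ | ⟨h, _⟩
      · exact key u v h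
      · exact (key v u h).symm
    -- take N = max f, get coloring with N colors
    obtain ⟨v0, _, hv0⟩ := Finset.exists_max_image Finset.univ f Finset.univ_nonempty
    set N : ℕ := f v0 with hN
    have hfleN : ∀ v, f v ≤ N := fun v => hv0 v (Finset.mem_univ v)
    have hcol : G.Colorable N := by
      refine ⟨⟨fun v => ⟨f v - 1, ?_⟩, ?_⟩⟩
      · have h1 := hfpos v; have h2 := hfleN v; have h3 := hfpos v0; omega
      · intro u v hadj hfe
        have h1 := hfpos u; have h2 := hfpos v
        have : f u - 1 = f v - 1 := congrArg Fin.val hfe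
        exact hproper u v hadj (by omega)
    obtain ⟨l, hnd, hch, hlast, hlen⟩ := hfspec v0
    refine ⟨l, hnd, hch.imp (fun a b hab => hs.1 (a, b) hab), ?_⟩
    calc G.chromaticNumber ≤ (N : ℕ∞) := hcol.chromaticNumber_le
      _ = (l.length : ℕ∞) := by rw [hlen]
end

section
/- Let G be a finite simple graph on n vertices with minimum degree at least k, where k ≥ 3 and n ≥ 2. Then for every edge {u, v} of G there exists a self-colliding path in G starting with the edge (u, v) of length at most 2⌈log_{k−1} n⌉; that is, there exist pairwise distinct vertices v₁ = u, v₂ = v, v₃, …, v_m with v_t adjacent to v_{t+1} for 1 ≤ t < m, with m − 1 ≤ 2⌈log_{k−1} n⌉, such that v_m is adjacent to v_i for some 1 ≤ i ≤ m − 2. -/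
set_option linter.unusedSectionVars false

namespace SCPaux

variable {V : Type} [DecidableEq V]

/-- There is a self-colliding path of length ≤ L starting with edge (u,v). -/
def SCP (G : SimpleGraph V) (u v : V) (L : ℕ) : Prop :=
  ∃ (l : List V) (hl : l ≠ []),
    l.Nodup ∧ l.Chain' G.Adj ∧ l.take 2 = [u, v] ∧
    l.length - 1 ≤ L ∧
    ∃ i : Fin l.length, (i : ℕ) + 2 < l.length ∧ G.Adj (l.getLast hl) (l.get i)

lemma SCP.mono {G : SimpleGraph V} {u v : V} {L L' : ℕ} (h : SCP G u v L) (hL : L ≤ L') :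
    SCP G u v L' := by
  obtain ⟨l, hl, h1, h2, h3, h4, h5⟩ := h
  exact ⟨l, hl, h1, h2, h3, h4.trans hL, h5⟩

lemma getLast_take {l : List V} {i : ℕ} (hi : i < l.length) (h : l.take (i+1) ≠ []) :
    (l.take (i+1)).getLast h = l.get ⟨i, hi⟩ := by
  have hlen : (l.take (i+1)).length = i + 1 := by
    rw [List.length_take]; omega
  have h2 : (l.take (i+1)).length - 1 = i := by omega
  simp [List.getLast_eq_getElem, hlen]

lemma scp_direct (G : SimpleGraph V) (u v : V) (p : List V) (hp0 : p ≠ [])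
    (hn : p.Nodup) (hc : p.Chain' G.Adj) (h2 : p.take 2 = [u, v])
    (B : ℕ) (hB : B + 2 < p.length)
    (hadj : G.Adj (p.getLast hp0) (p.get ⟨B, by omega⟩)) :
    SCP G u v (p.length - 1) :=
  ⟨p, hp0, hn, hc, h2, le_rfl, ⟨B, by omega⟩, hB, hadj⟩

lemma collide (G : SimpleGraph V) (u v : V) (p q : List V)
    (hp0 : p ≠ []) (hq0 : q ≠ [])
    (hp2 : p.take 2 = [u, v]) (hq2 : q.take 2 = [u, v])
    (hpl : 2 ≤ p.length) (hql : 2 ≤ q.length)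
    (hpn : p.Nodup) (hqn : q.Nodup)
    (hpc : p.Chain' G.Adj) (hqc : q.Chain' G.Adj)
    (hadj : G.Adj (p.getLast hp0) (q.getLast hq0))
    (hqlast : q.getLast hq0 ∉ p)
    (hnp : ¬ p <+: q)
    (hcons : ∀ i j (hi : i < p.length) (hj : j < q.length),
      p.get ⟨i, hi⟩ = q.get ⟨j, hj⟩ → p.take (i+1) = q.take (j+1)) :
    SCP G u v (p.length + q.length - 3) := by
  classical
  set P : ℕ → Prop := fun s => p.take (s+1) = q.take (s+1) with hPdef
  have hP1 : P 1 := by simp only [hPdef]; rw [hp2, hq2]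
  set t := Nat.findGreatest P q.length with htdef
  have ht1 : 1 ≤ t := Nat.le_findGreatest (by omega) hP1
  have hPt : p.take (t+1) = q.take (t+1) :=
    Nat.findGreatest_spec (m := 1) (by omega) hP1
  -- t + 1 < p.length
  have htp : t + 1 < p.length := by
    by_contra hcon
    have h1 : p.take (t+1) = p := List.take_of_length_le (by omega)
    exact hnp (by rw [← h1, hPt]; exact List.take_prefix _ _)
  have htq : t + 1 < q.length := by
    by_contra hcon
    have h1 : q.take (t+1) = q := List.take_of_length_le (by omega)
    have hqp : q <+: p := by rw [← h1, ← hPt]; exact List.take_prefix _ _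
    exact hqlast (hqp.subset (List.getLast_mem hq0))
  -- beyond t, q's entries avoid p
  have hnotin : ∀ s (hs : s < q.length), t < s → q.get ⟨s, hs⟩ ∉ p := by
    intro s hs hts hmem
    obtain ⟨⟨i, hi⟩, hget⟩ := List.mem_iff_get.mp hmem
    have htake := hcons i s hi hs hget
    have hlen := congrArg List.length htake
    rw [List.length_take, List.length_take] at hlen
    have his : i = s := by omega
    subst his
    exact Nat.findGreatest_is_greatest hts (by omega) htake
  -- the path
  set D := q.drop (t+1) with hDdef
  have hDlen : D.length = q.length - (t+1) := List.length_drop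
  have hD0 : D ≠ [] := by
    intro h; rw [h] at hDlen; simp at hDlen; omega
  have hDget : ∀ j (hj : j < D.length), D.get ⟨j, hj⟩ = q.get ⟨t+1+j, by omega⟩ := by
    intro j hj
    exact List.getElem_drop
  set l := p ++ D.reverse with hldef
  have hl0 : l ≠ [] := by simp [hldef, hp0]
  have hllen : l.length = p.length + (q.length - (t+1)) := by
    simp [hldef, hDlen]
  have hDmem : ∀ z ∈ D, ∃ s, ∃ hs : s < q.length, t < s ∧ q.get ⟨s, hs⟩ = z := by
    intro z hz
    obtain ⟨⟨j, hj⟩, hget⟩ := List.mem_iff_get.mp hz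
    exact ⟨t+1+j, by omega, by omega, by rw [← hDget j hj]; exact hget⟩
  -- nodup
  have hnd : l.Nodup := by
    rw [hldef, List.nodup_append']
    refine ⟨hpn, List.nodup_reverse.mpr (List.Nodup.sublist (List.drop_sublist _ _) hqn), ?_⟩
    intro z hzp hzD
    rw [List.mem_reverse] at hzD
    obtain ⟨s, hs, hts, hget⟩ := hDmem z hzD
    exact hnotin s hs hts (hget ▸ hzp)

  -- getLast facts
  have hDrev0 : D.reverse ≠ [] := by simp [hD0]
  have hheadD : D.reverse.head? = some (q.getLast hq0) := by
    rw [List.head?_eq_head hDrev0, List.head_reverse, List.getLast_drop]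
  -- chain
  have hch : l.Chain' G.Adj := by
    rw [hldef]; simp only [List.Chain']; rw [List.isChain_append]
    refine ⟨hpc, ?_, ?_⟩
    · rw [List.isChain_reverse]
      exact (hqc.drop (t+1)).imp fun a b hab => hab.symm
    · intro x hx y hy
      rw [List.getLast?_eq_getLast hp0, Option.mem_some_iff] at hx
      rw [hheadD, Option.mem_some_iff] at hy
      rw [← hx, ← hy]
      exact hadj
  -- take 2
  have htk : l.take 2 = [u, v] := by
    rw [hldef, List.take_append_of_le_length hpl, hp2]
  -- getLast of l
  have hlast : l.getLast hl0 = q.get ⟨t+1, htq⟩ := by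
    have h1 : l.getLast hl0 = D.reverse.getLast hDrev0 :=
      List.getLast_append_of_ne_nil _ hDrev0
    have h2 : D.reverse.getLast hDrev0 = D.head (by simpa using hDrev0) :=
      List.getLast_reverse _
    have h3 : D.head (by simpa using hDrev0) = q[t+1]'htq := List.head_drop _
    rw [h1, h2, h3]
    rfl
  -- the collision vertex
  have hpq_t : p.get ⟨t, by omega⟩ = q.get ⟨t, by omega⟩ := by
    have h1 : p.get ⟨t, by omega⟩ = (p.take (t+1)).get ⟨t, by rw [List.length_take]; omega⟩ :=
      List.getElem_take' (by omega) (by omega)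
    have h2 : q.get ⟨t, by omega⟩ = (q.take (t+1)).get ⟨t, by rw [List.length_take]; omega⟩ :=
      List.getElem_take' (by omega) (by omega)
    rw [h1, h2]
    exact List.get_of_eq hPt _
  have hlget : l.get ⟨t, by omega⟩ = p.get ⟨t, by omega⟩ :=
    (List.getElem_append_left' (by omega) _).symm
  have hadj2 : G.Adj (l.getLast hl0) (l.get ⟨t, by omega⟩) := by
    rw [hlast, hlget, hpq_t]
    exact ((List.isChain_iff_getElem.mp hqc) t (by omega)).symm
  refine ⟨l, hl0, hnd, hch, htk, by rw [hllen]; omega, ⟨t, by rw [hllen]; omega⟩,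
    by show t + 2 < l.length; rw [hllen]; omega, hadj2⟩

/-- A BFS tree of depth `a` grown from the edge `(u,v)`. -/
structure BFS (G : SimpleGraph V) (u v : V) (a : ℕ) where
  C : Finset V
  S : Finset V
  ch : V → List V
  hSC : S ⊆ C
  hu : u ∈ C
  hchu : ch u = [u]
  hlast : ∀ x ∈ C, (ch x).getLast? = some x
  hnodup : ∀ x ∈ C, (ch x).Nodup
  hchain : ∀ x ∈ C, (ch x).Chain' G.Adj
  htake : ∀ x ∈ C, x ≠ u → (ch x).take 2 = [u, v]
  hmem : ∀ x ∈ C, ∀ y ∈ ch x, y ∈ C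
  hpre : ∀ x ∈ C, ∀ p : List V, p <+: ch x → ∀ h : p ≠ [], ch (p.getLast h) = p
  hlen : ∀ x ∈ C, (ch x).length ≤ a + 1
  hS : ∀ x ∈ S, (ch x).length = a + 1

namespace BFS

variable {G : SimpleGraph V} {u v : V} {a : ℕ} (st : BFS G u v a)

lemma ch_ne {x : V} (hx : x ∈ st.C) : st.ch x ≠ [] := by
  intro h
  have := st.hlast x hx
  rw [h] at this
  simp at this

lemma getLast_ch {x : V} (hx : x ∈ st.C) (h : st.ch x ≠ []) : (st.ch x).getLast h = x := by
  have h1 := st.hlast x hx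
  rw [List.getLast?_eq_getLast h, Option.some_inj] at h1
  exact h1

lemma pos {x : V} (hx : x ∈ st.C) (i : ℕ) (hi : i < (st.ch x).length) :
    st.ch ((st.ch x).get ⟨i, hi⟩) = (st.ch x).take (i+1) := by
  have hne : (st.ch x).take (i+1) ≠ [] := by
    intro h
    rw [List.take_eq_nil_iff] at h
    rcases h with h | h
    · omega
    · rw [h] at hi; simp at hi
  have := st.hpre x hx _ (List.take_prefix (i+1) (st.ch x)) hne
  rwa [getLast_take hi hne] at this

lemma cons {x y : V} (hx : x ∈ st.C) (hy : y ∈ st.C) :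
    ∀ i j (hi : i < (st.ch x).length) (hj : j < (st.ch y).length),
      (st.ch x).get ⟨i, hi⟩ = (st.ch y).get ⟨j, hj⟩ →
      (st.ch x).take (i+1) = (st.ch y).take (j+1) := by
  intro i j hi hj h
  rw [← st.pos hx i hi, h, st.pos hy j hj]

lemma ne_u_of_len {x : V} (h2 : 2 ≤ (st.ch x).length) : x ≠ u := by
  intro h
  rw [h, st.hchu] at h2
  simp at h2

lemma take2 {x : V} (hx : x ∈ st.C) (h2 : 2 ≤ (st.ch x).length) :
    (st.ch x).take 2 = [u, v] :=
  st.htake x hx (st.ne_u_of_len h2)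

lemma len_S {x : V} (hx : x ∈ st.S) : (st.ch x).length = a + 1 := st.hS x hx

lemma get_mem_C {x : V} (hx : x ∈ st.C) {i : ℕ} (hi : i < (st.ch x).length) :
    (st.ch x).get ⟨i, hi⟩ ∈ st.C :=
  st.hmem x hx _ (List.get_mem _ _)

lemma mem_C_of_mem_ch {x y : V} (hx : x ∈ st.C) (hy : y ∈ st.ch x) : y ∈ st.C :=
  st.hmem x hx y hy

end BFS

/-- The base BFS tree of depth 1. -/
def baseBFS (G : SimpleGraph V) (u v : V) (huv : G.Adj u v) : BFS G u v 1 where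
  C := {u, v}
  S := {v}
  ch := fun x => if x = u then [u] else if x = v then [u, v] else [x]
  hSC := by intro x hx; simp at hx; simp [hx]
  hu := by simp
  hchu := by simp
  hlast := by
    intro x hx
    rcases Finset.mem_insert.mp hx with h | h
    · simp [h]
    · simp at h
      subst h
      rw [if_neg huv.ne', if_pos rfl]
      rfl
  hnodup := by
    intro x hx
    rcases Finset.mem_insert.mp hx with h | h
    · simp [h]
    · simp at h; subst h
      rw [if_neg huv.ne', if_pos rfl]
      simp [huv.ne]
  hchain := by
    intro x hx
    rcases Finset.mem_insert.mp hx with h | h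
    · simp [h, List.Chain']
    · simp at h; subst h
      rw [if_neg huv.ne', if_pos rfl]
      simp [huv, List.Chain']
  htake := by
    intro x hx hxu
    rcases Finset.mem_insert.mp hx with h | h
    · exact absurd h hxu
    · simp at h; subst h
      rw [if_neg huv.ne', if_pos rfl]
      rfl
  hmem := by
    intro x hx y hy
    by_cases hxu : x = u
    · rw [hxu] at hy
      simp at hy
      simp [hy]
    · have hxv : x = v := by
        rcases Finset.mem_insert.mp hx with h | h
        · exact absurd h hxu
        · simpa using h
      rw [hxv] at hy
      have hne : v ≠ u := huv.ne'
      simp [hne] at hy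
      rcases hy with h | h <;> simp [h]
  hpre := by
    intro x hx p hp hpne
    rcases Finset.mem_insert.mp hx with h | h
    · subst h
      rw [if_pos rfl] at hp
      have h1 := hp.length_le
      have h0 : 0 < p.length := List.length_pos_iff.mpr hpne
      simp at h1
      have hpeq := List.prefix_iff_eq_take.mp hp
      have hl1 : p.length = 1 := by omega
      rw [hl1] at hpeq
      simp at hpeq
      subst hpeq
      simp
    · simp at h; subst h
      rw [if_neg huv.ne', if_pos rfl] at hp
      have h1 := hp.length_le
      have h0 : 0 < p.length := List.length_pos_iff.mpr hpne
      simp at h1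
      have hpeq := List.prefix_iff_eq_take.mp hp
      have : p.length = 1 ∨ p.length = 2 := by omega
      rcases this with h | h
      · rw [h] at hpeq
        simp at hpeq
        subst hpeq
        simp
      · rw [h] at hpeq
        simp at hpeq
        subst hpeq
        simp [huv.ne']
  hlen := by
    intro x hx
    rcases Finset.mem_insert.mp hx with h | h
    · simp [h]
    · simp at h; subst h
      rw [if_neg huv.ne', if_pos rfl]
      simp
  hS := by
    intro x hx
    simp at hx; subst hx
    rw [if_neg huv.ne', if_pos rfl]
    rfl

lemma step {G : SimpleGraph V} [Fintype V] [DecidableRel G.Adj] {u v : V} {k d a : ℕ}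
    (hk : 3 ≤ k) (hdeg : ∀ w : V, k ≤ G.degree w)
    (hH : ¬ SCP G u v (2 * d)) (ha : 1 ≤ a) (had : a ≤ d)
    (st : BFS G u v a) :
    ∃ st' : BFS G u v (a + 1), (k - 1) * st.S.card ≤ st'.S.card := by
  classical
  -- Step A: any neighbor of a deepest vertex inside C must be its parent
  have hNC : ∀ x ∈ st.S, ∀ y ∈ st.C, G.Adj x y → ∀ hlt : a - 1 < (st.ch x).length,
      y = (st.ch x).get ⟨a - 1, hlt⟩ := by
    intro x hx y hy hadj hlt
    have hxC : x ∈ st.C := st.hSC hx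
    have hplen : (st.ch x).length = a + 1 := st.len_S hx
    have hpne : st.ch x ≠ [] := st.ch_ne hxC
    have hglx : (st.ch x).getLast hpne = x := st.getLast_ch hxC hpne
    have hp2 : (st.ch x).take 2 = [u, v] := st.take2 hxC (by omega)
    by_contra hne
    by_cases hyp : y ∈ st.ch x
    · obtain ⟨⟨i, hi⟩, hget⟩ := List.mem_iff_get.mp hyp
      have hxa : (st.ch x).get ⟨(st.ch x).length - 1, by omega⟩ = x := by
        rw [List.get_eq_getElem, ← List.getLast_eq_getElem]; exact hglx
      have hxyne : x ≠ y := hadj.ne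
      have hia : i ≠ a := by
        intro h
        apply hxyne
        rw [← hget]
        rw [show (⟨i, hi⟩ : Fin (st.ch x).length) = ⟨(st.ch x).length - 1, by omega⟩ from by
          ext; simp; omega]
        exact hxa.symm
      have hia1 : i ≠ a - 1 := by
        intro h
        apply hne
        rw [← hget]
        rw [show (⟨i, hi⟩ : Fin (st.ch x).length) = ⟨a - 1, hlt⟩ from by
          ext; simp [h]]
      exact hH ((scp_direct G u v (st.ch x) hpne (st.hnodup x hxC) (st.hchain x hxC) hp2 i
        (by omega) (by rw [hglx, hget]; exact hadj)).mono (by omega))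
    · have hyne : st.ch y ≠ [] := st.ch_ne hy
      have hgly : (st.ch y).getLast hyne = y := st.getLast_ch hy hyne
      have hqlen : (st.ch y).length ≤ a + 1 := st.hlen y hy
      have huchx : u ∈ st.ch x := by
        have h2 : u ∈ (st.ch x).take 2 := by rw [hp2]; simp
        exact List.mem_of_mem_take h2
      have hyu : y ≠ u := by rintro rfl; exact hyp huchx
      have hq2 : (st.ch y).take 2 = [u, v] := st.htake y hy hyu
      have hql2 : 2 ≤ (st.ch y).length := by
        have h2 := congrArg List.length hq2
        rw [List.length_take] at h2
        simp at h2
        omega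
      refine hH ((collide G u v (st.ch x) (st.ch y) hpne hyne hp2 hq2 (by omega) hql2
        (st.hnodup x hxC) (st.hnodup y hy) (st.hchain x hxC) (st.hchain y hy)
        (by rw [hglx, hgly]; exact hadj) (by rw [hgly]; exact hyp)
        ?_ (st.cons hxC hy)).mono (by omega))
      intro hpq
      have hlen2 := hpq.length_le
      have heq := hpq.eq_of_length (by omega)
      have h1 : some x = some y := by rw [← st.hlast x hxC, heq, st.hlast y hy]
      exact hadj.ne (Option.some_injective _ h1)
  -- Step B: each deepest vertex has ≥ k-1 fresh neighbors
  have hcard1 : ∀ x ∈ st.S, k - 1 ≤ (G.neighborFinset x \ st.C).card := by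
    intro x hx
    have hplen := st.len_S hx
    have hlt : a - 1 < (st.ch x).length := by omega
    set z := (st.ch x).get ⟨a - 1, hlt⟩ with hz
    have hsub : G.neighborFinset x \ {z} ⊆ G.neighborFinset x \ st.C := by
      intro y hy
      rw [Finset.mem_sdiff] at hy ⊢
      rcases hy with ⟨hyN, hyz⟩
      refine ⟨hyN, fun hyC => ?_⟩
      rw [SimpleGraph.mem_neighborFinset] at hyN
      exact hyz (by rw [Finset.mem_singleton, hz]; exact hNC x hx y hyC hyN hlt)
    have hdx : G.degree x = (G.neighborFinset x).card := rfl
    calc k - 1 ≤ G.degree x - 1 := by have := hdeg x; omega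
      _ = (G.neighborFinset x).card - ({z} : Finset V).card := by
          rw [← hdx, Finset.card_singleton]
      _ ≤ (G.neighborFinset x \ {z}).card := Finset.le_card_sdiff _ _
      _ ≤ (G.neighborFinset x \ st.C).card := Finset.card_le_card hsub
  -- Step C: fresh neighbor sets of distinct deepest vertices are disjoint
  have hdisj : ∀ x ∈ st.S, ∀ x' ∈ st.S, x ≠ x' →
      Disjoint (G.neighborFinset x \ st.C) (G.neighborFinset x' \ st.C) := by
    intro x hx x' hx' hxx'
    rw [Finset.disjoint_left]
    intro y hy hy'
    rw [Finset.mem_sdiff, SimpleGraph.mem_neighborFinset] at hy hy'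
    obtain ⟨hadjx, hyC⟩ := hy
    obtain ⟨hadjx', -⟩ := hy'
    have hxC := st.hSC hx
    have hx'C := st.hSC hx'
    have hplen : (st.ch x).length = a + 1 := st.len_S hx
    have hq0len : (st.ch x').length = a + 1 := st.len_S hx'
    have hpne : st.ch x ≠ [] := st.ch_ne hxC
    have hq0ne : st.ch x' ≠ [] := st.ch_ne hx'C
    have hglx : (st.ch x).getLast hpne = x := st.getLast_ch hxC hpne
    have hglx' : (st.ch x').getLast hq0ne = x' := st.getLast_ch hx'C hq0ne
    have hp2 : (st.ch x).take 2 = [u, v] := st.take2 hxC (by omega)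
    have hq02 : (st.ch x').take 2 = [u, v] := st.take2 hx'C (by omega)
    have hyq0 : y ∉ st.ch x' := fun h => hyC (st.mem_C_of_mem_ch hx'C h)
    have hypp : y ∉ st.ch x := fun h => hyC (st.mem_C_of_mem_ch hxC h)
    set q : List V := st.ch x' ++ [y] with hqdef
    have hqne : q ≠ [] := by simp [hqdef]
    have hq2 : q.take 2 = [u, v] := by
      rw [hqdef, List.take_append_of_le_length (by omega), hq02]
    have hqlen : q.length = a + 2 := by rw [hqdef, List.length_append, hq0len]; simp
    have hqnd : q.Nodup := by
      rw [hqdef, List.nodup_append']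
      refine ⟨st.hnodup x' hx'C, List.nodup_singleton y, ?_⟩
      intro z hz hzy
      simp at hzy
      subst hzy
      exact hyq0 hz
    have hqch : q.Chain' G.Adj := by
      rw [hqdef]; simp only [List.Chain']; rw [List.isChain_append]
      refine ⟨st.hchain x' hx'C, List.isChain_singleton y, ?_⟩
      intro b hb c hc
      rw [List.getLast?_eq_getLast hq0ne, Option.mem_some_iff] at hb
      simp at hc
      rw [← hb, ← hc, hglx']
      exact hadjx'
    have hgly : q.getLast hqne = y := List.getLast_concat
    refine hH ((collide G u v (st.ch x) q hpne hqne hp2 hq2 (by omega) (by omega)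
      (st.hnodup x hxC) hqnd (st.hchain x hxC) hqch
      (by rw [hglx, hgly]; exact hadjx) (by rw [hgly]; exact hypp) ?_ ?_).mono (by omega))
    · intro hpq
      have hple := List.prefix_iff_eq_take.mp hpq
      have hq0take : q.take ((st.ch x).length) = st.ch x' := by
        rw [hplen, hqdef, List.take_append_of_le_length (by omega),
          List.take_of_length_le (by omega)]
      rw [hq0take] at hple
      have h1 : some x = some x' := by
        rw [← st.hlast x hxC, ← st.hlast x' hx'C]
        exact congrArg _ hple
      exact hxx' (Option.some_injective _ h1)
    · intro i j hi hj hget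
      by_cases hjlt : j < (st.ch x').length
      · have hq_eq : q.get ⟨j, hj⟩ = (st.ch x').get ⟨j, hjlt⟩ :=
          (List.getElem_append_left' hjlt _).symm
        have hc := st.cons hxC hx'C i j hi hjlt (by rw [← hq_eq]; exact hget)
        rw [hc, hqdef, List.take_append_of_le_length (by omega)]
      · exfalso
        have hy2 : q.get ⟨j, hj⟩ = y := by
          have hgl := List.getLast_eq_getElem hqne
          rw [hgly] at hgl
          rw [show (⟨j, hj⟩ : Fin q.length) = ⟨q.length - 1, by omega⟩ from by
            ext; simp; omega]
          exact hgl.symm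
        apply hypp
        have hyy : (st.ch x).get ⟨i, hi⟩ = y := by rw [hget, hy2]
        exact hyy ▸ List.get_mem _ _
  -- Step D: build the next state
  set S' := st.S.biUnion (fun x => G.neighborFinset x \ st.C) with hS'def
  have hS'notC : ∀ y ∈ S', y ∉ st.C := by
    intro y hy
    rw [hS'def, Finset.mem_biUnion] at hy
    obtain ⟨x, -, hyx⟩ := hy
    exact (Finset.mem_sdiff.mp hyx).2
  have hS'ex : ∀ y ∈ S', ∃ x, x ∈ st.S ∧ G.Adj x y ∧ y ∉ st.C := by
    intro y hy
    rw [hS'def, Finset.mem_biUnion] at hy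
    obtain ⟨x, hx, hyx⟩ := hy
    rw [Finset.mem_sdiff, SimpleGraph.mem_neighborFinset] at hyx
    exact ⟨x, hx, hyx.1, hyx.2⟩
  set pa : V → V := fun y =>
    if h : ∃ x, x ∈ st.S ∧ G.Adj x y ∧ y ∉ st.C then h.choose else u with hpadef
  have hpa : ∀ y ∈ S', pa y ∈ st.S ∧ G.Adj (pa y) y := by
    intro y hy
    have h := hS'ex y hy
    rw [hpadef]
    dsimp only
    rw [dif_pos h]
    exact ⟨h.choose_spec.1, h.choose_spec.2.1⟩
  set ch' : V → List V := fun y => if y ∈ S' then st.ch (pa y) ++ [y] else st.ch y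
    with hch'def
  have hch'C : ∀ x ∈ st.C, ch' x = st.ch x := by
    intro x hx
    rw [hch'def]
    dsimp only
    rw [if_neg (fun h => hS'notC x h hx)]
  have hch'S : ∀ y ∈ S', ch' y = st.ch (pa y) ++ [y] := by
    intro y hy
    rw [hch'def]
    dsimp only
    rw [if_pos hy]
  have hpaC : ∀ y ∈ S', pa y ∈ st.C := fun y hy => st.hSC (hpa y hy).1
  have hpalen : ∀ y ∈ S', (st.ch (pa y)).length = a + 1 :=
    fun y hy => st.len_S (hpa y hy).1
  refine ⟨⟨st.C ∪ S', S', ch', Finset.subset_union_right,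
    Finset.mem_union_left _ st.hu, ?_, ?_, ?_, ?_, ?_, ?_, ?_, ?_, ?_⟩, ?_⟩
  · rw [hch'C u st.hu]; exact st.hchu
  · intro x hx
    rcases Finset.mem_union.mp hx with h | h
    · rw [hch'C x h]; exact st.hlast x h
    · rw [hch'S x h]; exact List.getLast?_concat
  · intro x hx
    rcases Finset.mem_union.mp hx with h | h
    · rw [hch'C x h]; exact st.hnodup x h
    · rw [hch'S x h, List.nodup_append']
      refine ⟨st.hnodup _ (hpaC x h), List.nodup_singleton x, ?_⟩
      intro z hz hzx
      simp at hzx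
      subst hzx
      exact hS'notC z h (st.mem_C_of_mem_ch (hpaC z h) hz)
  · intro x hx
    rcases Finset.mem_union.mp hx with h | h
    · rw [hch'C x h]; exact st.hchain x h
    · rw [hch'S x h]; simp only [List.Chain']; rw [List.isChain_append]
      refine ⟨st.hchain _ (hpaC x h), List.isChain_singleton x, ?_⟩
      intro b hb c hc
      rw [List.getLast?_eq_getLast (st.ch_ne (hpaC x h)), Option.mem_some_iff] at hb
      simp at hc
      rw [← hb, ← hc, st.getLast_ch (hpaC x h)]
      exact (hpa x h).2
  · intro x hx hxu
    rcases Finset.mem_union.mp hx with h | h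
    · rw [hch'C x h]; exact st.htake x h hxu
    · rw [hch'S x h, List.take_append_of_le_length (by rw [hpalen x h]; omega)]
      exact st.take2 (hpaC x h) (by rw [hpalen x h]; omega)
  · intro x hx y hy
    rcases Finset.mem_union.mp hx with h | h
    · rw [hch'C x h] at hy
      exact Finset.mem_union_left _ (st.mem_C_of_mem_ch h hy)
    · rw [hch'S x h] at hy
      rcases List.mem_append.mp hy with h2 | h2
      · exact Finset.mem_union_left _ (st.mem_C_of_mem_ch (hpaC x h) h2)
      · simp at h2
        subst h2
        exact Finset.mem_union_right _ h
  · intro x hx p hp hpne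
    rcases Finset.mem_union.mp hx with h | h
    · rw [hch'C x h] at hp
      rw [hch'C _ (st.mem_C_of_mem_ch h (hp.subset (List.getLast_mem hpne)))]
      exact st.hpre x h p hp hpne
    · rw [hch'S x h] at hp
      by_cases hlenp : p.length ≤ (st.ch (pa x)).length
      · have hp2 : p <+: st.ch (pa x) :=
          List.prefix_of_prefix_length_le hp (List.prefix_append _ _) hlenp
        rw [hch'C _ (st.mem_C_of_mem_ch (hpaC x h) (hp2.subset (List.getLast_mem hpne)))]
        exact st.hpre (pa x) (hpaC x h) p hp2 hpne
      · have hfull : p = st.ch (pa x) ++ [x] := hp.eq_of_length (by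
          have h1 := hp.length_le
          rw [List.length_append] at h1 ⊢
          simp at h1 ⊢
          omega)
        subst hfull
        rw [List.getLast_concat]
        exact hch'S x h
  · intro x hx
    rcases Finset.mem_union.mp hx with h | h
    · rw [hch'C x h]
      exact (st.hlen x h).trans (by omega)
    · rw [hch'S x h, List.length_append, hpalen x h]
      simp
  · intro x hx
    rw [hch'S x hx, List.length_append, hpalen x hx]
    simp
  · show (k - 1) * st.S.card ≤ S'.card
    rw [hS'def, Finset.card_biUnion hdisj]
    calc (k - 1) * st.S.card = st.S.card * (k - 1) := Nat.mul_comm _ _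
      _ = ∑ _x ∈ st.S, (k - 1) := by rw [Finset.sum_const, smul_eq_mul]
      _ ≤ ∑ x ∈ st.S, (G.neighborFinset x \ st.C).card := Finset.sum_le_sum hcard1

end SCPaux

/-- In a finite simple graph on `n ≥ 2` vertices with minimum degree at least
`k ≥ 3`, every edge `(u, v)` starts a self-colliding path of length at most
`2⌈log_{k-1} n⌉`: a duplicate-free list `l = u :: v :: ⋯` chained by adjacency
whose last vertex is adjacent to some vertex `l.get i` with `i + 2 < l.length`
(i.e. to some `vᵢ` with `1 ≤ i ≤ m - 2` in 1-indexed notation). -/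
theorem exists_self_colliding_path {V : Type} [Fintype V] [DecidableEq V]
    (G : SimpleGraph V) [DecidableRel G.Adj]
    (k : ℕ) (hk : 3 ≤ k) (hn : 2 ≤ Fintype.card V)
    (hdeg : ∀ w : V, k ≤ G.degree w)
    (u v : V) (huv : G.Adj u v) :
    ∃ (l : List V) (hl : l ≠ []),
      l.Nodup ∧ l.Chain' G.Adj ∧ l.take 2 = [u, v] ∧
      l.length - 1 ≤ 2 * Nat.clog (k - 1) (Fintype.card V) ∧
      ∃ i : Fin l.length, (i : ℕ) + 2 < l.length ∧
        G.Adj (l.getLast hl) (l.get i) := by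
  classical
  by_contra hcon
  have hH : ¬ SCPaux.SCP G u v (2 * Nat.clog (k - 1) (Fintype.card V)) := hcon
  set d := Nat.clog (k - 1) (Fintype.card V) with hd
  have key : ∀ j : ℕ, j ≤ d → ∃ st : SCPaux.BFS G u v (j + 1), (k - 1) ^ j ≤ st.S.card := by
    intro j
    induction j with
    | zero =>
      intro _
      exact ⟨SCPaux.baseBFS G u v huv, by show (k-1)^0 ≤ ({v} : Finset V).card; simp⟩
    | succ m ih =>
      intro hmd
      obtain ⟨st, hst⟩ := ih (by omega)
      obtain ⟨st', hst'⟩ := SCPaux.step hk hdeg hH (by omega) (by omega) st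
      refine ⟨st', ?_⟩
      calc (k - 1) ^ (m + 1) = (k - 1) * (k - 1) ^ m := by ring
      _ ≤ (k - 1) * st.S.card := Nat.mul_le_mul_left _ hst
      _ ≤ st'.S.card := hst'
  obtain ⟨st, hst⟩ := key d le_rfl
  have hkn : Fintype.card V ≤ (k - 1) ^ d := Nat.le_pow_clog (by omega) _
  have huS : u ∉ st.S := by
    intro h
    have h2 := st.hS u h
    rw [st.hchu] at h2
    simp at h2
  have hsub : insert u st.S ⊆ st.C := by
    intro z hz
    rcases Finset.mem_insert.mp hz with h | h
    · subst h; exact st.hu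
    · exact st.hSC h
  have h1 : st.S.card + 1 ≤ st.C.card := by
    rw [← Finset.card_insert_of_notMem huS]
    exact Finset.card_le_card hsub
  have h2 : st.C.card ≤ Fintype.card V := Finset.card_le_univ st.C
  omega
end

section
/- Let G be a finite simple graph on n vertices with minimum degree at least k, where k ≥ 3 and n ≥ 2. Then G contains a cycle, and its girth satisfies g(G) ≤ 2⌈log_{k−1} n⌉. -/
open SimpleGraph Walk

variable {V : Type} [DecidableEq V] {G : SimpleGraph V}

lemma path_loop_nil {u : V} {p : G.Walk u u} (hp : p.IsPath) : p = Walk.nil := by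
  have := SimpleGraph.Path.loop_eq (⟨p, hp⟩ : G.Path u u)
  simpa using congrArg Subtype.val this

lemma two_paths_cycle : ∀ (n : ℕ) (u v : V) (p q : G.Walk u v), p.IsPath → q.IsPath →
    p ≠ q → p.length + q.length ≤ n →
    ∃ (w : V) (c : G.Walk w w), c.IsCycle ∧ c.length ≤ p.length + q.length := by
  intro n
  induction n using Nat.strong_induction_on with
  | _ n ih =>
  intro u v p q hp hq hne hlen
  by_cases hx : ∃ x, x ∈ p.support ∧ x ∈ q.support ∧ x ≠ u ∧ x ≠ v
  · obtain ⟨x, hxp, hxq, hxu, hxv⟩ := hx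
    set p1 := p.takeUntil x hxp with hp1
    set p2 := p.dropUntil x hxp with hp2
    set q1 := q.takeUntil x hxq with hq1
    set q2 := q.dropUntil x hxq with hq2
    have hps : p1.append p2 = p := p.take_spec hxp
    have hqs : q1.append q2 = q := q.take_spec hxq
    have hplen : p1.length + p2.length = p.length := by
      rw [← hps]; exact (Walk.length_append _ _).symm
    have hqlen : q1.length + q2.length = q.length := by
      rw [← hqs]; exact (Walk.length_append _ _).symm
    have hp1pos : 1 ≤ p1.length := by
      rcases Nat.eq_zero_or_pos p1.length with h | h
      · exact absurd (Walk.eq_of_length_eq_zero h).symm hxu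
      · exact h
    have hq1pos : 1 ≤ q1.length := by
      rcases Nat.eq_zero_or_pos q1.length with h | h
      · exact absurd (Walk.eq_of_length_eq_zero h).symm hxu
      · exact h
    have hp2pos : 1 ≤ p2.length := by
      rcases Nat.eq_zero_or_pos p2.length with h | h
      · exact absurd (Walk.eq_of_length_eq_zero h) hxv
      · exact h
    have hq2pos : 1 ≤ q2.length := by
      rcases Nat.eq_zero_or_pos q2.length with h | h
      · exact absurd (Walk.eq_of_length_eq_zero h) hxv
      · exact h
    by_cases h1 : p1 = q1
    · have h2 : p2 ≠ q2 := by
        intro h2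
        exact hne (by rw [← hps, ← hqs, h1, h2])
      obtain ⟨w, c, hc, hcl⟩ := ih (p2.length + q2.length) (by omega) x v p2 q2
        (hp.dropUntil hxp) (hq.dropUntil hxq) h2 le_rfl
      exact ⟨w, c, hc, by omega⟩
    · obtain ⟨w, c, hc, hcl⟩ := ih (p1.length + q1.length) (by omega) u x p1 q1
        (hp.takeUntil hxp) (hq.takeUntil hxq) h1 le_rfl
      exact ⟨w, c, hc, by omega⟩
  · push_neg at hx
    have huv : u ≠ v := by
      intro h
      subst h
      exact hne ((path_loop_nil hp).trans (path_loop_nil hq).symm)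
    -- p is not nil
    cases p with
    | nil => exact absurd rfl huv
    | @cons _ a _ h p' =>
      -- cycle: cons h (p'.append q.reverse)
      have hp' : p'.IsPath := hp.of_cons
      have hus : u ∉ p'.support := by
        have := hp.support_nodup
        simp only [Walk.support_cons, List.nodup_cons] at this
        exact this.1
      have hqrev : q.reverse.support = v :: q.reverse.support.tail :=
        Walk.support_eq_cons _
      have hvq : v ∉ q.reverse.support.tail := by
        have := (hq.reverse).support_nodup
        rw [hqrev] at this
        exact (List.nodup_cons.mp this).1
      have htail_sub : ∀ y ∈ q.reverse.support.tail, y ∈ q.support := by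
        intro y hy
        have : y ∈ q.reverse.support := by rw [hqrev]; exact List.mem_cons_of_mem _ hy
        rwa [Walk.support_reverse, List.mem_reverse] at this
      have happ : (p'.append q.reverse).IsPath := by
        rw [Walk.isPath_def, Walk.support_append, List.nodup_append]
        refine ⟨hp'.support_nodup, ?_, ?_⟩
        · have := (hq.reverse).support_nodup
          rw [hqrev] at this
          exact (List.nodup_cons.mp this).2
        · intro y hyp z hyq hyz; subst hyz
          have hyp' : y ∈ (Walk.cons h p').support := by
            rw [Walk.support_cons]; exact List.mem_cons_of_mem _ hyp
          have hyq' : y ∈ q.support := htail_sub y hyq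
          by_cases hyu : y = u
          · exact hus (hyu ▸ hyp)
          · exact hvq ((hx y hyp' hyq' hyu) ▸ hyq)
      have hedge : s(u, a) ∉ (p'.append q.reverse).edges := by
        rw [Walk.edges_append, List.mem_append]
        rintro (he | he)
        · exact hus (Walk.fst_mem_support_of_mem_edges _ he)
        · rw [Walk.edges_reverse, List.mem_reverse] at he
          have haq : a ∈ q.support := Walk.snd_mem_support_of_mem_edges _ he
          have hap : a ∈ (Walk.cons h p').support := by
            rw [Walk.support_cons]
            exact List.mem_cons_of_mem _ (Walk.start_mem_support _)
          by_cases hau : a = u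
          · exact G.irrefl (hau ▸ h)
          have hav : a = v := hx a hap haq hau
          subst hav
          · -- a = v : p' : Walk v v, so p' = nil, p is single edge u-v, and s(u,v) ∈ q.edges
            have hp'nil : p' = Walk.nil := path_loop_nil hp'
            cases q with
            | nil => exact absurd rfl huv
            | @cons _ b _ h2 q' =>
              rw [Walk.edges_cons, List.mem_cons] at he
              rcases he with he | he
              · have hbv : b = a := by
                  rcases Sym2.eq_iff.mp he with ⟨-, hh⟩ | ⟨hh1, hh2⟩
                  · exact hh.symm
                  · exact absurd hh2 hau
                subst hbv
                have : q' = Walk.nil := path_loop_nil hq.of_cons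
                exact hne (by subst hp'nil this; rfl)
              · have : u ∈ q'.support := Walk.fst_mem_support_of_mem_edges _ he
                have hnodup := hq.support_nodup
                simp only [Walk.support_cons, List.nodup_cons] at hnodup
                exact hnodup.1 this
      refine ⟨u, Walk.cons h (p'.append q.reverse), ?_, ?_⟩
      · exact (Walk.cons_isCycle_iff _ _).mpr ⟨happ, hedge⟩
      · simp [Walk.length_append]


open SimpleGraph Walk Finset

variable {V : Type} [DecidableEq V] {G : SimpleGraph V}

section
variable {r : ℕ}

lemma claimA (hnc : ¬ ∃ (w : V) (c : G.Walk w w), c.IsCycle ∧ c.length ≤ 2 * r)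
    {v x y1 y2 : V} {m : ℕ} (hm : m + 1 ≤ r)
    (h1 : G.Adj x y1) (h2 : G.Adj x y2) (hne : y1 ≠ y2)
    (hr1 : G.Reachable v y1) (hr2 : G.Reachable v y2)
    (hd1 : G.dist v y1 ≤ m) (hd2 : G.dist v y2 ≤ m)
    (hx : m ≤ G.dist v x) : False := by
  obtain ⟨sp1, hsp1, hl1⟩ := hr1.exists_path_of_dist
  obtain ⟨sp2, hsp2, hl2⟩ := hr2.exists_path_of_dist
  have hxs : ∀ (y : V) (hy : G.Adj x y) (sp : G.Walk v y), sp.IsPath →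
      sp.length = G.dist v y → G.dist v y ≤ m → x ∉ sp.support := by
    intro y hy sp hsp hl hd hmem
    have hts : (sp.takeUntil x hmem).append (sp.dropUntil x hmem) = sp := sp.take_spec hmem
    have hlen : (sp.takeUntil x hmem).length + (sp.dropUntil x hmem).length = sp.length := by
      have h' := Walk.length_append (sp.takeUntil x hmem) (sp.dropUntil x hmem)
      rw [hts] at h'; omega
    have ht : G.dist v x ≤ (sp.takeUntil x hmem).length := dist_le _
    have hd0 : (sp.dropUntil x hmem).length = 0 := by omega
    have : x = y := Walk.eq_of_length_eq_zero hd0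
    subst this
    exact G.irrefl hy
  have hx1 : x ∉ sp1.support := hxs y1 h1 sp1 hsp1 hl1 hd1
  have hx2 : x ∉ sp2.support := hxs y2 h2 sp2 hsp2 hl2 hd2
  set w1 := sp1.concat h1.symm with hw1
  set w2 := sp2.concat h2.symm with hw2
  have hpw1 : w1.IsPath := by
    rw [Walk.isPath_def, Walk.support_concat, List.nodup_append]
    exact ⟨hsp1.support_nodup, List.nodup_singleton x, by
      intro a ha b hb hab; rw [List.mem_singleton] at hb; subst hb; subst hab; exact hx1 ha⟩
  have hpw2 : w2.IsPath := by
    rw [Walk.isPath_def, Walk.support_concat, List.nodup_append]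
    exact ⟨hsp2.support_nodup, List.nodup_singleton x, by
      intro a ha b hb hab; rw [List.mem_singleton] at hb; subst hb; subst hab; exact hx2 ha⟩
  have hwne : w1 ≠ w2 := by
    intro h
    have hsup : w1.support = w2.support := congrArg Walk.support h
    rw [hw1, hw2, Walk.support_concat, Walk.support_concat] at hsup
    have hss : sp1.support = sp2.support := by
      have := congrArg List.reverse hsup
      simp only [List.concat_eq_append, List.reverse_append, List.reverse_cons,
        List.reverse_nil, List.nil_append, List.singleton_append, List.cons.injEq] at this
      have := congrArg List.reverse this.2
      simpa using this
    have h1' : sp1.support.reverse = y1 :: sp1.reverse.support.tail := by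
      rw [← Walk.support_reverse]; exact Walk.support_eq_cons _
    have h2' : sp2.support.reverse = y2 :: sp2.reverse.support.tail := by
      rw [← Walk.support_reverse]; exact Walk.support_eq_cons _
    rw [hss, h2'] at h1'
    exact hne (List.cons.injEq .. ▸ h1').1.symm
  obtain ⟨w, c, hc, hcl⟩ := two_paths_cycle (w1.length + w2.length) v x w1 w2 hpw1 hpw2 hwne le_rfl
  refine hnc ⟨w, c, hc, ?_⟩
  have e1 : w1.length = sp1.length + 1 := Walk.length_concat _ _
  have e2 : w2.length = sp2.length + 1 := Walk.length_concat _ _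
  omega

end

section counting
lemma sphere_card [Fintype V] [DecidableRel G.Adj] {r k : ℕ}
    (hnc : ¬ ∃ (w : V) (c : G.Walk w w), c.IsCycle ∧ c.length ≤ 2 * r)
    (hk : 3 ≤ k) (hdeg : ∀ w : V, k ≤ G.degree w) (v : V) :
    ∀ i, 1 ≤ i → i ≤ r → k * (k - 1) ^ (i - 1) ≤
      (Finset.univ.filter (fun y => G.dist v y = i)).card := by
  intro i
  induction i with
  | zero => omega
  | succ i ihi =>
    intro _ hir
    rcases Nat.eq_zero_or_pos i with rfl | hi
    · -- base case: S 1 ⊇ N(v)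
      have hsub : G.neighborFinset v ⊆ Finset.univ.filter (fun y => G.dist v y = 1) := by
        intro y hy
        rw [SimpleGraph.mem_neighborFinset] at hy
        simp [SimpleGraph.dist_eq_one_iff_adj, hy]
      calc k * (k - 1) ^ (1 - 1) = k := by norm_num
        _ ≤ G.degree v := hdeg v
        _ = (G.neighborFinset v).card := (G.card_neighborFinset_eq_degree v).symm
        _ ≤ _ := Finset.card_le_card hsub
    · -- inductive step
      set S : ℕ → Finset V := fun j => Finset.univ.filter (fun y => G.dist v y = j) with hS
      have hSi : k * (k - 1) ^ (i - 1) ≤ (S i).card := ihi hi (by omega)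
      have hreach : ∀ x ∈ S i, G.Reachable v x := by
        intro x hx
        rw [hS, Finset.mem_filter] at hx
        exact SimpleGraph.Reachable.of_dist_ne_zero (by omega)
      -- each x in S i has ≥ k-1 neighbors in S (i+1)
      have hfwd : ∀ x ∈ S i, k - 1 ≤ ((G.neighborFinset x) ∩ S (i + 1)).card := by
        intro x hx
        have hdx : G.dist v x = i := by
          rw [hS, Finset.mem_filter] at hx; exact hx.2
        have hrx : G.Reachable v x := hreach x hx
        have hnbr : ∀ y ∈ G.neighborFinset x, G.dist v y ≤ i + 1 := by
          intro y hy
          rw [SimpleGraph.mem_neighborFinset] at hy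
          obtain ⟨p, _, hpl⟩ := hrx.exists_path_of_dist
          have := SimpleGraph.dist_le (p.concat hy)
          rw [Walk.length_concat] at this
          omega
        set A : Finset V := (G.neighborFinset x).filter (fun y => G.dist v y ≤ i) with hA
        have hAcard : A.card ≤ 1 := by
          rw [Finset.card_le_one]
          intro y1 hy1 y2 hy2
          by_contra hne
          rw [hA, Finset.mem_filter, SimpleGraph.mem_neighborFinset] at hy1 hy2
          exact claimA hnc (by omega : i + 1 ≤ r) hy1.1 hy2.1 hne
            (hrx.trans hy1.1.reachable) (hrx.trans hy2.1.reachable)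
            hy1.2 hy2.2 (by omega)
        have hcover : G.neighborFinset x ⊆ A ∪ ((G.neighborFinset x) ∩ S (i + 1)) := by
          intro y hy
          have hle := hnbr y hy
          rcases Nat.lt_or_ge (G.dist v y) (i + 1) with h | h
          · exact Finset.mem_union_left _ (by rw [hA, Finset.mem_filter]; exact ⟨hy, by omega⟩)
          · refine Finset.mem_union_right _ (Finset.mem_inter.mpr ⟨hy, ?_⟩)
            rw [hS, Finset.mem_filter]
            exact ⟨Finset.mem_univ _, by omega⟩
        have := Finset.card_le_card hcover
        have hun := Finset.card_union_le A ((G.neighborFinset x) ∩ S (i + 1))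
        have hdegx := hdeg x
        rw [← G.card_neighborFinset_eq_degree] at hdegx
        omega
      -- disjointness
      have hdisj : (S i : Set V).PairwiseDisjoint
          (fun x => (G.neighborFinset x) ∩ S (i + 1)) := by
        intro x1 hx1 x2 hx2 hne12
        simp only [Finset.mem_coe] at hx1 hx2
        simp only [Function.onFun]
        refine Finset.disjoint_left.mpr ?_
        intro y hy1 hy2
        rw [Finset.mem_inter, SimpleGraph.mem_neighborFinset] at hy1 hy2
        have hdy : G.dist v y = i + 1 := by
          have := hy1.2; rw [hS, Finset.mem_filter] at this; exact this.2
        have hd1 : G.dist v x1 = i := by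
          rw [hS, Finset.mem_filter] at hx1; exact hx1.2
        have hd2 : G.dist v x2 = i := by
          rw [hS, Finset.mem_filter] at hx2; exact hx2.2
        exact claimA hnc (by omega : i + 1 ≤ r) hy1.1.symm hy2.1.symm hne12
          (hreach x1 (by rw [hS, Finset.mem_filter]; exact ⟨Finset.mem_univ _, hd1⟩))
          (hreach x2 (by rw [hS, Finset.mem_filter]; exact ⟨Finset.mem_univ _, hd2⟩))
          (by omega) (by omega) (by omega)
      have hbu : (S i).biUnion (fun x => (G.neighborFinset x) ∩ S (i + 1)) ⊆ S (i + 1) := by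
        intro y hy
        rw [Finset.mem_biUnion] at hy
        obtain ⟨x, _, hy⟩ := hy
        exact (Finset.mem_inter.mp hy).2
      have hcard : ((S i).biUnion (fun x => (G.neighborFinset x) ∩ S (i + 1))).card
          = ∑ x ∈ S i, ((G.neighborFinset x) ∩ S (i + 1)).card :=
        Finset.card_biUnion (fun x hx y hy hne => hdisj hx hy hne)
      have hsum : (k - 1) * (S i).card ≤ ∑ x ∈ S i, ((G.neighborFinset x) ∩ S (i + 1)).card := by
        calc (k - 1) * (S i).card = ∑ _x ∈ S i, (k - 1) := by
              rw [Finset.sum_const, smul_eq_mul, Nat.mul_comm]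
          _ ≤ _ := Finset.sum_le_sum hfwd
      have hfin := Finset.card_le_card hbu
      have hpow : k * (k - 1) ^ (i + 1 - 1) = (k - 1) * (k * (k - 1) ^ (i - 1)) := by
        have : i + 1 - 1 = (i - 1) + 1 := by omega
        rw [this, pow_succ]; ring
      calc k * (k - 1) ^ (i + 1 - 1) = (k - 1) * (k * (k - 1) ^ (i - 1)) := hpow
        _ ≤ (k - 1) * (S i).card := Nat.mul_le_mul_left _ hSi
        _ ≤ ∑ x ∈ S i, ((G.neighborFinset x) ∩ S (i + 1)).card := hsum
        _ = _ := hcard.symm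
        _ ≤ (S (i + 1)).card := hfin

end counting

/-- Moore-type bound: a finite simple graph on `n ≥ 2` vertices with minimum
degree at least `k ≥ 3` contains a cycle, and its girth is at most
`2⌈log_{k-1} n⌉`. -/
theorem girth_le_of_minDegree {V : Type} [Fintype V] [DecidableEq V]
    (G : SimpleGraph V) [DecidableRel G.Adj]
    (k : ℕ) (hk : 3 ≤ k) (hn : 2 ≤ Fintype.card V)
    (hdeg : ∀ w : V, k ≤ G.degree w) :
    (∃ (v : V) (c : G.Walk v v), c.IsCycle) ∧
    G.girth ≤ ((2 * Nat.clog (k - 1) (Fintype.card V) : ℕ) : ℕ∞) := by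
  classical
  set n := Fintype.card V with hn'
  set r := Nat.clog (k - 1) n with hr
  have hk1 : 1 < k - 1 := by omega
  have hrpos : 0 < r := Nat.clog_pos hk1 hn
  have hnle : n ≤ (k - 1) ^ r := Nat.le_pow_clog hk1 n
  have key : ∃ (w : V) (c : G.Walk w w), c.IsCycle ∧ c.length ≤ 2 * r := by
    by_contra hnc
    have hne : Nonempty V := Fintype.card_pos_iff.mp (by omega)
    obtain ⟨v⟩ := hne
    have hbig := sphere_card (r := r) hnc hk hdeg v r hrpos le_rfl
    have hsub : Finset.univ.filter (fun y => G.dist v y = r) ⊆ Finset.univ.erase v := by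
      intro y hy
      rw [Finset.mem_filter] at hy
      refine Finset.mem_erase.mpr ⟨?_, Finset.mem_univ _⟩
      intro h
      subst h
      rw [SimpleGraph.dist_self] at hy
      omega
    have hcard : (Finset.univ.filter (fun y => G.dist v y = r)).card ≤ n - 1 := by
      have := Finset.card_le_card hsub
      rwa [Finset.card_erase_of_mem (Finset.mem_univ v), Finset.card_univ, ← hn'] at this
    have hpow1 : 1 ≤ (k - 1) ^ (r - 1) := Nat.one_le_pow _ _ (by omega)
    have hsplit : k * (k - 1) ^ (r - 1) = (k - 1) ^ r + (k - 1) ^ (r - 1) := by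
      have h1 : r - 1 + 1 = r := by omega
      have h2 : (k - 1) ^ r = (k - 1) ^ (r - 1) * (k - 1) := by rw [← h1, pow_succ, h1]
      have h3 : k = (k - 1) + 1 := by omega
      rw [h2]; nth_rewrite 1 [h3]; ring
    omega
  obtain ⟨w, c, hc, hcl⟩ := key
  constructor
  · exact ⟨w, c, hc⟩
  · have hegirth : G.egirth ≤ (c.length : ℕ∞) :=
      iInf_le_of_le w (iInf_le_of_le c (iInf_le _ hc))
    have h1 : G.egirth ≤ ((2 * r : ℕ) : ℕ∞) :=
      le_trans hegirth (by exact_mod_cast hcl)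
    have h2 : G.girth ≤ 2 * r := by
      have := ENat.toNat_le_toNat h1 (ENat.coe_ne_top _)
      simpa [SimpleGraph.girth] using this
    exact_mod_cast h2
end

section
/- Let G be a finite simple graph on n vertices with minimum degree at least δ, where δ ≥ 3 and n ≥ 2. Then every vertex u of G lies within graph distance ⌈log_{δ−1} n⌉ + 1 of some cycle of length at most 2⌈log_{δ−1} n⌉; that is, there exists a cycle C in G with |C| ≤ 2⌈log_{δ−1} n⌉ and a vertex w on C with dist_G(u, w) ≤ ⌈log_{δ−1} n⌉ + 1. -/
open SimpleGraph

section Aux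

variable {V : Type} [DecidableEq V] {G : SimpleGraph V}

private lemma aux_dist_le_of_mem_support {u v y : V} {p : G.Walk u v}
    (hy : y ∈ p.support) : G.dist u y ≤ p.length :=
  (SimpleGraph.dist_le (p.takeUntil y hy)).trans (p.length_takeUntil_le hy)

private lemma aux_dist_lt_of_mem_support {u v y : V} {p : G.Walk u v}
    (hy : y ∈ p.support) (hne : y ≠ v) : G.dist u y < p.length := by
  have hsplit := congrArg SimpleGraph.Walk.length (p.take_spec hy)
  rw [SimpleGraph.Walk.length_append] at hsplit
  have h1 : G.dist u y ≤ (p.takeUntil y hy).length := SimpleGraph.dist_le _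
  have h2 : (p.dropUntil y hy).length ≠ 0 := fun h0 =>
    hne (SimpleGraph.Walk.eq_of_length_eq_zero h0)
  omega

private lemma aux_isPath_concat {u v w : V} {p : G.Walk u v} (hp : p.IsPath)
    (h : G.Adj v w) (hw : w ∉ p.support) : (p.concat h).IsPath := by
  rw [SimpleGraph.Walk.isPath_def, SimpleGraph.Walk.support_concat,
    List.nodup_append]
  refine ⟨hp.support_nodup, List.nodup_singleton _, ?_⟩
  intro a ha b hb hab
  simp only [List.mem_singleton] at hb
  subst hb hab
  exact hw ha

/-- From two distinct paths between the same endpoints one can extract a cycle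
of length at most the sum of their lengths, based at a vertex on one of them. -/
private lemma aux_exists_cycle_of_two_paths {u v : V} {p q : G.Walk u v}
    (hp : p.IsPath) (hq : q.IsPath) (hne : p ≠ q) :
    ∃ (w : V) (c : G.Walk w w), c.IsCycle ∧ c.length ≤ p.length + q.length ∧
      (w ∈ p.support ∨ w ∈ q.support) := by
  classical
  set s : Set (Sym2 V) := {e | e ∈ p.edges ∨ e ∈ q.edges} with hs
  set G' := SimpleGraph.fromEdgeSet s with hG'
  have hle : G' ≤ G := by
    intro a b hab
    rw [hG', SimpleGraph.fromEdgeSet_adj] at hab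
    rcases hab.1 with h | h
    · exact (SimpleGraph.mem_edgeSet G).mp (p.edges_subset_edgeSet h)
    · exact (SimpleGraph.mem_edgeSet G).mp (q.edges_subset_edgeSet h)
  have hpe : ∀ e ∈ p.edges, e ∈ G'.edgeSet := by
    intro e he
    rw [hG', SimpleGraph.edgeSet_fromEdgeSet]
    exact ⟨Or.inl he, G.not_isDiag_of_mem_edgeSet (p.edges_subset_edgeSet he)⟩
  have hqe : ∀ e ∈ q.edges, e ∈ G'.edgeSet := by
    intro e he
    rw [hG', SimpleGraph.edgeSet_fromEdgeSet]
    exact ⟨Or.inr he, G.not_isDiag_of_mem_edgeSet (q.edges_subset_edgeSet he)⟩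
  have hna : ¬ G'.IsAcyclic := by
    rw [SimpleGraph.isAcyclic_iff_path_unique]
    intro hun
    have h1 := hun ⟨p.transfer G' hpe, hp.transfer hpe⟩ ⟨q.transfer G' hqe, hq.transfer hqe⟩
    apply hne
    have h2 : p.transfer G' hpe = q.transfer G' hqe := congrArg Subtype.val h1
    have h3 := congrArg (fun w : G'.Walk u v =>
      w.transfer G (fun e he =>
        SimpleGraph.edgeSet_mono hle (SimpleGraph.Walk.edges_subset_edgeSet _ he))) h2
    simpa [SimpleGraph.Walk.transfer_transfer, SimpleGraph.Walk.transfer_self] using h3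
  have hex : ∃ (w : V) (c : G'.Walk w w), c.IsCycle := by
    by_contra hcon
    push_neg at hcon
    exact hna fun w c => hcon w c
  obtain ⟨w, c, hc⟩ := hex
  have hsubE : ∀ e ∈ c.edges, e ∈ p.edges ∨ e ∈ q.edges := by
    intro e he
    have h1 := c.edges_subset_edgeSet he
    rw [hG', SimpleGraph.edgeSet_fromEdgeSet] at h1
    exact h1.1
  -- length bound
  have hnodup : c.edges.Nodup := hc.isCircuit.isTrail.edges_nodup
  have hlen : c.length ≤ p.length + q.length := by
    have h1 : c.edges.toFinset ⊆ p.edges.toFinset ∪ q.edges.toFinset := by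
      intro e he
      rw [List.mem_toFinset] at he
      rcases hsubE e he with h | h
      · exact Finset.mem_union_left _ (List.mem_toFinset.mpr h)
      · exact Finset.mem_union_right _ (List.mem_toFinset.mpr h)
    calc c.length = c.edges.length := (SimpleGraph.Walk.length_edges c).symm
      _ = c.edges.toFinset.card := (List.toFinset_card_of_nodup hnodup).symm
      _ ≤ (p.edges.toFinset ∪ q.edges.toFinset).card := Finset.card_le_card h1
      _ ≤ p.edges.toFinset.card + q.edges.toFinset.card := Finset.card_union_le _ _
      _ ≤ p.edges.length + q.edges.length :=
          Nat.add_le_add p.edges.toFinset_card_le q.edges.toFinset_card_le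
      _ = p.length + q.length := by
          rw [SimpleGraph.Walk.length_edges, SimpleGraph.Walk.length_edges]
  -- base vertex is on p or q
  have hwmem : w ∈ p.support ∨ w ∈ q.support := by
    cases c with
    | nil => exact absurd rfl hc.isCircuit.ne_nil
    | @cons _ b _ hadj c' =>
        have he : s(w, b) ∈ (SimpleGraph.Walk.cons hadj c').edges := by
          rw [SimpleGraph.Walk.edges_cons]; exact List.mem_cons_self
        rcases hsubE _ he with h | h
        · exact Or.inl (p.fst_mem_support_of_mem_edges h)
        · exact Or.inr (q.fst_mem_support_of_mem_edges h)
  refine ⟨w, c.mapLe hle, (SimpleGraph.Walk.mapLe_isCycle hle).mpr hc, ?_, hwmem⟩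
  simpa [SimpleGraph.Walk.mapLe, SimpleGraph.Walk.length_map] using hlen

end Aux

/-- In a finite simple graph on `n ≥ 2` vertices with minimum degree at least
`δ ≥ 3`, every vertex `u` lies within distance `⌈log_{δ-1} n⌉ + 1` of some
cycle of length at most `2⌈log_{δ-1} n⌉`: there is a cycle based at a vertex
`w` of that length and a walk from `u` to `w` of length at most
`⌈log_{δ-1} n⌉ + 1`. -/
theorem vertex_close_to_short_cycle {V : Type} [Fintype V] [DecidableEq V]
    (G : SimpleGraph V) [DecidableRel G.Adj]
    (δ : ℕ) (hδ : 3 ≤ δ) (hn : 2 ≤ Fintype.card V)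
    (hdeg : ∀ w : V, δ ≤ G.degree w) (u : V) :
    ∃ (w : V) (c : G.Walk w w) (p : G.Walk u w),
      c.IsCycle ∧
      c.length ≤ 2 * Nat.clog (δ - 1) (Fintype.card V) ∧
      p.length ≤ Nat.clog (δ - 1) (Fintype.card V) + 1 := by
  classical
  by_contra hcon
  push_neg at hcon
  set n := Fintype.card V with hn'
  set b := δ - 1 with hb'
  set k := Nat.clog b n with hk'
  have hb2 : 2 ≤ b := by omega
  -- From two distinct short paths out of `u` we obtain a contradiction.
  have key : ∀ (v : V) (p q : G.Walk u v), p.IsPath → q.IsPath → p ≠ q →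
      p.length + q.length ≤ 2 * k → p.length ≤ k + 1 → q.length ≤ k + 1 → False := by
    intro v p q hp hq hne hsum hpl hql
    obtain ⟨w, c, hc, hclen, hw⟩ := aux_exists_cycle_of_two_paths hp hq hne
    rcases hw with hw | hw
    · have := hcon w c (p.takeUntil w hw) hc (hclen.trans hsum)
      have hle := (p.length_takeUntil_le hw).trans hpl
      omega
    · have := hcon w c (q.takeUntil w hw) hc (hclen.trans hsum)
      have hle := (q.length_takeUntil_le hw).trans hql
      omega
  -- spheres around u
  set S : ℕ → Finset V := fun i =>
    Finset.univ.filter (fun v => G.Reachable u v ∧ G.dist u v = i) with hS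
  have hmemS : ∀ i v, v ∈ S i ↔ G.Reachable u v ∧ G.dist u v = i := by
    intro i v; simp [hS]
  -- growth of spheres
  have grow : ∀ i, i + 1 ≤ k → b * (S i).card ≤ (S (i + 1)).card := by
    intro i hik
    have hcard : ∀ v ∈ S i, b ≤ (G.neighborFinset v ∩ S (i + 1)).card := by
      intro v hv
      obtain ⟨hvr, hvd⟩ := (hmemS i v).mp hv
      obtain ⟨sp, hsp, hsplen⟩ := hvr.exists_path_of_dist
      rw [hvd] at hsplen
      -- neighbors of v which are not in the next sphere
      have hTcard : (G.neighborFinset v \ S (i + 1)).card ≤ 1 := by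
        rcases Nat.eq_zero_or_pos i with hi0 | hipos
        · -- i = 0 : no exceptional neighbors
          subst hi0
          have hvu : v = u := by
            have := hvr.symm.dist_eq_zero_iff.mpr
            have h0 : G.dist u v = 0 := hvd
            rcases SimpleGraph.dist_eq_zero_iff_eq_or_not_reachable.mp h0 with h | h
            · exact h.symm
            · exact absurd hvr h
          subst hvu
          have : G.neighborFinset v \ S 1 = ∅ := by
            rw [Finset.eq_empty_iff_forall_notMem]
            intro x hx
            rw [Finset.mem_sdiff, SimpleGraph.mem_neighborFinset] at hx
            obtain ⟨hadj, hxS⟩ := hx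
            have hxr : G.Reachable v x := hadj.reachable
            have hd1 : G.dist v x ≤ 1 :=
              (SimpleGraph.dist_le (SimpleGraph.Walk.cons hadj SimpleGraph.Walk.nil)).trans
                (by simp)
            have hdne : G.dist v x ≠ 1 := by
              intro h1
              exact hxS ((hmemS 1 x).mpr ⟨hxr, h1⟩)
            have hd0 : G.dist v x = 0 := by omega
            have hxv : v = x := by
              rcases SimpleGraph.dist_eq_zero_iff_eq_or_not_reachable.mp hd0 with h | h
              · exact h
              · exact absurd hxr h
            exact G.irrefl (hxv ▸ hadj)
          rw [this]; simp
        · -- i ≥ 1 : all exceptional neighbors are at distance i - 1, and at most one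
          -- first: no neighbor at distance i
          have hnotI : ∀ x, G.Adj v x → G.dist u x ≠ i := by
            intro x hadj hdx
            have hxr : G.Reachable u x := hvr.trans hadj.reachable
            obtain ⟨spx, hspx, hspxlen⟩ := hxr.exists_path_of_dist
            rw [hdx] at hspxlen
            have hvnot : v ∉ spx.support := by
              intro hmem
              by_cases hvx : v = x
              · exact G.irrefl (hvx ▸ hadj)
              · have := aux_dist_lt_of_mem_support hmem hvx
                omega
            have hpath : (spx.concat hadj.symm).IsPath := aux_isPath_concat hspx hadj.symm hvnot
            refine key v (spx.concat hadj.symm) sp hpath hsp ?_ ?_ ?_ ?_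
            · intro h
              have := congrArg SimpleGraph.Walk.length h
              rw [SimpleGraph.Walk.length_concat] at this
              omega
            · rw [SimpleGraph.Walk.length_concat]; omega
            · rw [SimpleGraph.Walk.length_concat]; omega
            · omega
          -- every exceptional neighbor is at distance i - 1
          have hTd : ∀ x ∈ G.neighborFinset v \ S (i + 1), G.dist u x + 1 = i := by
            intro x hx
            rw [Finset.mem_sdiff, SimpleGraph.mem_neighborFinset] at hx
            obtain ⟨hadj, hxS⟩ := hx
            have hxr : G.Reachable u x := hvr.trans hadj.reachable
            have hub : G.dist u x ≤ i + 1 :=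
              (SimpleGraph.dist_le (sp.concat hadj)).trans
                (by rw [SimpleGraph.Walk.length_concat]; omega)
            have hne1 : G.dist u x ≠ i + 1 := fun h1 => hxS ((hmemS (i + 1) x).mpr ⟨hxr, h1⟩)
            have hnei : G.dist u x ≠ i := hnotI x hadj
            have hlb : i ≤ G.dist u x + 1 := by
              obtain ⟨spx, hspx, hspxlen⟩ := hxr.exists_path_of_dist
              have := SimpleGraph.dist_le (spx.concat hadj.symm)
              rw [SimpleGraph.Walk.length_concat, hspxlen] at this
              omega
            omega
          rw [Finset.card_le_one]
          intro x hx y hy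
          by_contra hxy
          -- two neighbors at distance i - 1 : build two distinct paths of length i to v
          have hdx := hTd x hx
          have hdy := hTd y hy
          rw [Finset.mem_sdiff, SimpleGraph.mem_neighborFinset] at hx hy
          have hxr : G.Reachable u x := hvr.trans hx.1.reachable
          have hyr : G.Reachable u y := hvr.trans hy.1.reachable
          obtain ⟨spx, hspx, hspxlen⟩ := hxr.exists_path_of_dist
          obtain ⟨spy, hspy, hspylen⟩ := hyr.exists_path_of_dist
          have hvnx : v ∉ spx.support := by
            intro hmem
            have := aux_dist_le_of_mem_support hmem
            omega
          have hvny : v ∉ spy.support := by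
            intro hmem
            have := aux_dist_le_of_mem_support hmem
            omega
          have hpx : (spx.concat hx.1.symm).IsPath := aux_isPath_concat hspx hx.1.symm hvnx
          have hpy : (spy.concat hy.1.symm).IsPath := aux_isPath_concat hspy hy.1.symm hvny
          refine key v (spx.concat hx.1.symm) (spy.concat hy.1.symm) hpx hpy ?_ ?_ ?_ ?_
          · -- distinct : x on the first but not the second
            intro h
            have hxmem : x ∈ (spx.concat hx.1.symm).support := by
              rw [SimpleGraph.Walk.support_concat]
              exact List.mem_append_left _ (SimpleGraph.Walk.end_mem_support spx)
            rw [h, SimpleGraph.Walk.support_concat,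
              List.mem_append] at hxmem
            rcases hxmem with hmem | hmem
            · have := aux_dist_lt_of_mem_support hmem hxy
              omega
            · simp only [List.mem_singleton] at hmem
              exact G.irrefl (hmem ▸ hx.1)
          · rw [SimpleGraph.Walk.length_concat, SimpleGraph.Walk.length_concat]; omega
          · rw [SimpleGraph.Walk.length_concat]; omega
          · rw [SimpleGraph.Walk.length_concat]; omega
      have hdeg' : δ ≤ (G.neighborFinset v).card := by
        rw [G.card_neighborFinset_eq_degree]; exact hdeg v
      have hsplit := Finset.card_sdiff_add_card_inter (G.neighborFinset v) (S (i + 1))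
      omega
    -- disjointness of neighborhoods within the next sphere
    have hdisj : ∀ v₁ ∈ S i, ∀ v₂ ∈ S i, v₁ ≠ v₂ →
        Disjoint (G.neighborFinset v₁ ∩ S (i + 1)) (G.neighborFinset v₂ ∩ S (i + 1)) := by
      intro v₁ hv₁ v₂ hv₂ hvne
      rw [Finset.disjoint_left]
      intro x hx1 hx2
      rw [Finset.mem_inter, SimpleGraph.mem_neighborFinset] at hx1 hx2
      obtain ⟨hadj1, hxS⟩ := hx1
      obtain ⟨hadj2, _⟩ := hx2
      obtain ⟨hxr, hxd⟩ := (hmemS (i + 1) x).mp hxS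
      obtain ⟨hv1r, hv1d⟩ := (hmemS i v₁).mp hv₁
      obtain ⟨hv2r, hv2d⟩ := (hmemS i v₂).mp hv₂
      obtain ⟨sp1, hsp1, hsp1len⟩ := hv1r.exists_path_of_dist
      obtain ⟨sp2, hsp2, hsp2len⟩ := hv2r.exists_path_of_dist
      have hxn1 : x ∉ sp1.support := by
        intro hmem
        have := aux_dist_le_of_mem_support hmem
        omega
      have hxn2 : x ∉ sp2.support := by
        intro hmem
        have := aux_dist_le_of_mem_support hmem
        omega
      have hp1 : (sp1.concat hadj1).IsPath := aux_isPath_concat hsp1 hadj1 hxn1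
      have hp2 : (sp2.concat hadj2).IsPath := aux_isPath_concat hsp2 hadj2 hxn2
      refine key x (sp1.concat hadj1) (sp2.concat hadj2) hp1 hp2 ?_ ?_ ?_ ?_
      · intro h
        have hv1mem : v₁ ∈ (sp1.concat hadj1).support := by
          rw [SimpleGraph.Walk.support_concat]
          exact List.mem_append_left _ (SimpleGraph.Walk.end_mem_support sp1)
        rw [h, SimpleGraph.Walk.support_concat,
          List.mem_append] at hv1mem
        rcases hv1mem with hmem | hmem
        · have := aux_dist_lt_of_mem_support hmem hvne
          omega
        · simp only [List.mem_singleton] at hmem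
          exact G.irrefl (hmem ▸ hadj1)
      · rw [SimpleGraph.Walk.length_concat, SimpleGraph.Walk.length_concat]; omega
      · rw [SimpleGraph.Walk.length_concat]; omega
      · rw [SimpleGraph.Walk.length_concat]; omega
    calc b * (S i).card = ∑ _v ∈ S i, b := by
          rw [Finset.sum_const, smul_eq_mul, mul_comm]
      _ ≤ ∑ v ∈ S i, (G.neighborFinset v ∩ S (i + 1)).card := Finset.sum_le_sum hcard
      _ = ((S i).biUnion fun v => G.neighborFinset v ∩ S (i + 1)).card :=
          (Finset.card_biUnion hdisj).symm
      _ ≤ (S (i + 1)).card := by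
          apply Finset.card_le_card
          intro x hx
          rw [Finset.mem_biUnion] at hx
          obtain ⟨v, _, hv⟩ := hx
          exact (Finset.mem_inter.mp hv).2
  -- sphere sizes grow like b^i
  have hpow : ∀ i, i ≤ k → b ^ i ≤ (S i).card := by
    intro i
    induction i with
    | zero =>
        intro _
        have hu0 : u ∈ S 0 := (hmemS 0 u).mpr ⟨SimpleGraph.Reachable.refl u, G.dist_self⟩
        simpa using Finset.card_pos.mpr ⟨u, hu0⟩
    | succ i ih =>
        intro hik
        calc b ^ (i + 1) = b * b ^ i := by ring
          _ ≤ b * (S i).card := Nat.mul_le_mul_left b (ih (by omega))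
          _ ≤ (S (i + 1)).card := grow i hik
  -- final contradiction
  have hk1 : 1 ≤ k := Nat.clog_pos (by omega) hn
  have h1 : n ≤ b ^ k := Nat.le_pow_clog (by omega) n
  have h2 : b ^ k ≤ (S k).card := hpow k le_rfl
  have hune : u ∉ S k := by
    intro hu
    have := ((hmemS k u).mp hu).2
    rw [G.dist_self] at this
    omega
  have h3 : (S k).card ≤ n - 1 := by
    have hsub : S k ⊆ Finset.univ.erase u := by
      intro x hx
      rw [Finset.mem_erase]
      exact ⟨fun h => hune (h ▸ hx), Finset.mem_univ x⟩
    calc (S k).card ≤ (Finset.univ.erase u).card := Finset.card_le_card hsub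
      _ = n - 1 := by rw [Finset.card_erase_of_mem (Finset.mem_univ u), Finset.card_univ]
  omega
end

section
/- Let G be a finite simple graph on n vertices, n ≥ 2, and let k ≥ 3 be an integer. If every cycle of G has length strictly greater than 2⌈log_{k−1} n⌉, then G is (k − 1)-degenerate; that is, every nonempty subgraph of G contains a vertex whose degree in that subgraph is at most k − 1. In particular, G has no subgraph with minimum degree k. -/
open SimpleGraph

/-- Two distinct paths between the same endpoints yield a cycle of bounded length. -/
lemma cycle_of_two_paths {V : Type} {G : SimpleGraph V} {u v : V}
    (p q : G.Walk u v) (hp : p.IsPath) (hq : q.IsPath) (hne : p ≠ q) :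
    ∃ (x : V) (c : G.Walk x x), c.IsCycle ∧ c.length ≤ p.length + q.length := by
  classical
  set S : Set (Sym2 V) := {e | e ∈ p.edges ∨ e ∈ q.edges} with hS
  set K := SimpleGraph.fromEdgeSet S with hK
  have hSsub : S ⊆ G.edgeSet := by
    rintro e (he | he)
    · exact p.edges_subset_edgeSet he
    · exact q.edges_subset_edgeSet he
  have hKedge : K.edgeSet = S \ {e | e.IsDiag} := SimpleGraph.edgeSet_fromEdgeSet S
  have hmem : ∀ e ∈ S, e ∈ K.edgeSet := by
    intro e he
    rw [hKedge]
    exact ⟨he, G.not_isDiag_of_mem_edgeSet (hSsub he)⟩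
  have hpK : ∀ e ∈ p.edges, e ∈ K.edgeSet := fun e he => hmem e (Or.inl he)
  have hqK : ∀ e ∈ q.edges, e ∈ K.edgeSet := fun e he => hmem e (Or.inr he)
  set p' := p.transfer K hpK with hp'def
  set q' := q.transfer K hqK with hq'def
  have hp' : p'.IsPath := hp.transfer hpK
  have hq' : q'.IsPath := hq.transfer hqK
  have hKG : ∀ (a b : V) (w : K.Walk a b), ∀ e ∈ w.edges, e ∈ G.edgeSet := by
    intro a b w e he
    exact hSsub (((hKedge ▸ w.edges_subset_edgeSet he) : e ∈ S \ _).1)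
  have hne' : p' ≠ q' := by
    intro h
    apply hne
    have h2 := congrArg (fun w : K.Walk u v => w.transfer G (hKG u v w)) h
    simpa [hp'def, hq'def, SimpleGraph.Walk.transfer_transfer,
      SimpleGraph.Walk.transfer_self] using h2
  have hnoacyclic : ¬ K.IsAcyclic := by
    intro hac
    rw [SimpleGraph.isAcyclic_iff_path_unique] at hac
    have := hac ⟨p', hp'⟩ ⟨q', hq'⟩
    exact hne' (congrArg Subtype.val this)
  rw [SimpleGraph.IsAcyclic] at hnoacyclic
  push_neg at hnoacyclic
  obtain ⟨x, c, hc⟩ := hnoacyclic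
  have hcG : ∀ e ∈ c.edges, e ∈ G.edgeSet := hKG x x c
  refine ⟨x, c.transfer G hcG, hc.transfer hcG, ?_⟩
  have hnodup : c.edges.Nodup := hc.edges_nodup
  have hsub : c.edges ⊆ p.edges ++ q.edges := by
    intro e he
    have : e ∈ S := ((hKedge ▸ c.edges_subset_edgeSet he) : e ∈ S \ _).1
    exact List.mem_append.mpr this
  calc (c.transfer G hcG).length = c.length := SimpleGraph.Walk.length_transfer c hcG
    _ = c.edges.length := (SimpleGraph.Walk.length_edges c).symm
    _ ≤ (p.edges ++ q.edges).length := (List.subperm_of_subset hnodup hsub).length_le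
    _ = p.length + q.length := by simp

open SimpleGraph

/-- If every cycle of a finite simple graph `G` on `n ≥ 2` vertices has length
strictly greater than `2⌈log_{k-1} n⌉` (where `k ≥ 3`), then `G` is
`(k-1)`-degenerate: every subgraph with nonempty vertex set has a vertex of
degree at most `k - 1` within that subgraph. In particular, `G` has no
subgraph (with nonempty vertex set) of minimum degree at least `k`. -/
theorem degenerate_of_no_short_cycles {V : Type} [Fintype V]
    (G : SimpleGraph V) (k : ℕ) (hk : 3 ≤ k) (hn : 2 ≤ Fintype.card V)
    (hcyc : ∀ (v : V) (c : G.Walk v v), c.IsCycle →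
      2 * Nat.clog (k - 1) (Fintype.card V) < c.length) :
    (∀ H : G.Subgraph, H.verts.Nonempty →
      ∃ v ∈ H.verts, (H.neighborSet v).ncard ≤ k - 1) ∧
    ¬ ∃ H : G.Subgraph, H.verts.Nonempty ∧
      ∀ v ∈ H.verts, k ≤ (H.neighborSet v).ncard := by
  classical
  set n := Fintype.card V with hndef
  set r := Nat.clog (k - 1) n with hrdef
  have hr1 : 1 ≤ r := Nat.clog_pos (by omega) (by omega)
  have key : ∀ H : G.Subgraph, H.verts.Nonempty →
      ¬(∀ v ∈ H.verts, k ≤ (H.neighborSet v).ncard) := by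
    rintro H ⟨v₀, hv₀⟩ hdeg
    set G' := H.coe with hG'
    set v0 : ↥H.verts := ⟨v₀, hv₀⟩ with hv0
    -- degrees in the coercion graph
    have hdeg' : ∀ u : ↥H.verts, k ≤ (G'.neighborSet u).toFinset.card := by
      intro u
      have himg : Subtype.val '' (G'.neighborSet u) = H.neighborSet ↑u := by
        ext w
        constructor
        · rintro ⟨b, hb, rfl⟩; exact hb
        · intro hw
          exact ⟨⟨w, (SimpleGraph.Subgraph.Adj.snd_mem hw)⟩, hw, rfl⟩
      have h2 := Set.ncard_image_of_injective (G'.neighborSet u) Subtype.val_injective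
      rw [himg] at h2
      rw [← Set.ncard_eq_toFinset_card', ← h2]
      exact hdeg ↑u u.2
    -- no short cycles in G'
    have noShort : ∀ (x : ↥H.verts) (c : G'.Walk x x), c.IsCycle → 2 * r < c.length := by
      intro x c hc
      have hmap : (c.map H.hom).IsCycle :=
        (SimpleGraph.Walk.map_isCycle_iff_of_injective SimpleGraph.Subgraph.hom_injective).mpr hc
      have := hcyc ↑x (c.map H.hom) hmap
      exact lt_of_lt_of_eq this (SimpleGraph.Walk.length_map _ _)
    -- support of short paths has small distance
    have distSupport : ∀ (a : ↥H.verts) (p : G'.Walk v0 a) (u : ↥H.verts), u ∈ p.support →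
        G'.dist v0 u ≤ p.length ∧ (u ≠ a → G'.dist v0 u + 1 ≤ p.length) := by
      intro a p u hu
      have hsplit := congrArg SimpleGraph.Walk.length (p.take_spec hu)
      rw [SimpleGraph.Walk.length_append] at hsplit
      have hdle : G'.dist v0 u ≤ (p.takeUntil u hu).length := SimpleGraph.dist_le _
      constructor
      · omega
      · intro hne
        have : (p.dropUntil u hu).length ≠ 0 := fun h0 =>
          hne (SimpleGraph.Walk.eq_of_length_eq_zero h0)
        omega
    -- two short paths to neighbors of a common vertex give a contradiction
    have twoPaths : ∀ (a b w : ↥H.verts) (pa : G'.Walk v0 a) (pb : G'.Walk v0 b),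
        pa.IsPath → pb.IsPath → G'.Adj a w → G'.Adj b w → a ≠ b →
        w ∉ pa.support → w ∉ pb.support →
        pa.length + 1 ≤ r → pb.length + 1 ≤ r → False := by
      intro a b w pa pb hpa hpb haw hbw hab hwa hwb hla hlb
      have h1 : (pa.concat haw).IsPath := by
        rw [← SimpleGraph.Walk.isPath_reverse_iff, SimpleGraph.Walk.reverse_concat]
        exact hpa.reverse.cons (by simpa using hwa)
      have h2 : (pb.concat hbw).IsPath := by
        rw [← SimpleGraph.Walk.isPath_reverse_iff, SimpleGraph.Walk.reverse_concat]
        exact hpb.reverse.cons (by simpa using hwb)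
      have hne : pa.concat haw ≠ pb.concat hbw := by
        intro h
        obtain ⟨hv, -⟩ := SimpleGraph.Walk.concat_inj h
        exact hab hv
      obtain ⟨x, c, hc, hlen⟩ := cycle_of_two_paths _ _ h1 h2 hne
      have hshort := noShort x c hc
      rw [SimpleGraph.Walk.length_concat, SimpleGraph.Walk.length_concat] at hlen
      omega
    -- distance spheres
    set Tf : ℕ → Finset ↥H.verts := fun i =>
      Finset.univ.filter (fun w => G'.Reachable v0 w ∧ G'.dist v0 w = i) with hTf
    have memTf : ∀ (i : ℕ) (w : ↥H.verts),
        w ∈ Tf i ↔ (G'.Reachable v0 w ∧ G'.dist v0 w = i) := by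
      intro i w; simp [hTf]
    -- growth of spheres
    have growth : ∀ i, i + 1 ≤ r → (k - 1) * (Tf i).card ≤ (Tf (i + 1)).card := by
      intro i hir
      set F : ↥H.verts → Finset ↥H.verts := fun u =>
        (G'.neighborSet u).toFinset ∩ Tf (i + 1) with hF
      have hFsub : ∀ u, F u ⊆ Tf (i + 1) := fun u => Finset.inter_subset_right
      have hcard : ∀ u ∈ Tf i, k - 1 ≤ (F u).card := by
        intro u hu
        rw [memTf] at hu
        set N := (G'.neighborSet u).toFinset with hN
        have hNadj : ∀ w ∈ N, G'.Adj u w := by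
          intro w hw; rw [hN, Set.mem_toFinset] at hw; exact hw
        have hNball : ∀ w ∈ N, G'.Reachable v0 w ∧ G'.dist v0 w ≤ i + 1 := by
          intro w hw
          obtain ⟨p, hp, hplen⟩ := hu.1.exists_path_of_dist
          refine ⟨⟨p.concat (hNadj w hw)⟩, ?_⟩
          have := SimpleGraph.dist_le (p.concat (hNadj w hw))
          rw [SimpleGraph.Walk.length_concat, hplen, hu.2] at this
          exact this
        set D := N \ Tf (i + 1) with hD
        have hDdist : ∀ a ∈ D, G'.Reachable v0 a ∧ G'.dist v0 a ≤ i := by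
          intro a ha
          rw [hD, Finset.mem_sdiff] at ha
          have hball := hNball a ha.1
          have : G'.dist v0 a ≠ i + 1 := fun h =>
            ha.2 ((memTf _ _).mpr ⟨hball.1, h⟩)
          exact ⟨hball.1, by omega⟩
        have hDcard : D.card ≤ 1 := by
          rw [Finset.card_le_one]
          intro a ha b hb
          by_contra hab
          have hDa := hDdist a ha
          have hDb := hDdist b hb
          obtain ⟨pa, hpa, hla⟩ := hDa.1.exists_path_of_dist
          obtain ⟨pb, hpb, hlb⟩ := hDb.1.exists_path_of_dist
          have hau : G'.Adj a u := (hNadj a (by rw [hD, Finset.mem_sdiff] at ha; exact ha.1)).symm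
          have hbu : G'.Adj b u := (hNadj b (by rw [hD, Finset.mem_sdiff] at hb; exact hb.1)).symm
          have hua : u ∉ pa.support := by
            intro hmem
            have := (distSupport a pa u hmem).2 (fun h => G'.irrefl (h ▸ hau))
            omega
          have hub : u ∉ pb.support := by
            intro hmem
            have := (distSupport b pb u hmem).2 (fun h => G'.irrefl (h ▸ hbu))
            omega
          exact twoPaths a b u pa pb hpa hpb hau hbu hab hua hub (by omega) (by omega)
        have hDN : D ⊆ N := Finset.sdiff_subset
        have hFeq : F u = N \ D := by
          rw [hF, hD, Finset.sdiff_sdiff_self_left]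
        have hNk : k ≤ N.card := hdeg' u
        rw [hFeq, Finset.card_sdiff_of_subset hDN]
        omega
      have hdisj : ∀ u ∈ (Tf i : Finset ↥H.verts), ∀ u' ∈ Tf i, u ≠ u' →
          Disjoint (F u) (F u') := by
        intro u hu u' hu' huu
        rw [memTf] at hu hu'
        rw [Finset.disjoint_left]
        intro w hwu hwu'
        rw [hF] at hwu hwu'
        simp only [Finset.mem_inter, Set.mem_toFinset] at hwu hwu'
        have hwT := (memTf _ _).mp hwu.2
        obtain ⟨pu, hpu, hlu⟩ := hu.1.exists_path_of_dist
        obtain ⟨pu', hpu', hlu'⟩ := hu'.1.exists_path_of_dist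
        have hwpu : w ∉ pu.support := by
          intro hmem
          have := (distSupport u pu w hmem).1
          omega
        have hwpu' : w ∉ pu'.support := by
          intro hmem
          have := (distSupport u' pu' w hmem).1
          omega
        exact twoPaths u u' w pu pu' hpu hpu' hwu.1 hwu'.1 huu hwpu hwpu' (by omega) (by omega)
      calc (k - 1) * (Tf i).card = ∑ _u ∈ Tf i, (k - 1) := by
            rw [Finset.sum_const, smul_eq_mul, mul_comm]
        _ ≤ ∑ u ∈ Tf i, (F u).card := Finset.sum_le_sum hcard
        _ = ((Tf i).biUnion F).card := (Finset.card_biUnion hdisj).symm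
        _ ≤ (Tf (i + 1)).card :=
            Finset.card_le_card (Finset.biUnion_subset.mpr (fun u _ => hFsub u))
    -- sphere size lower bound
    have hv00 : v0 ∈ Tf 0 := (memTf 0 v0).mpr ⟨SimpleGraph.Reachable.refl _, by simp⟩
    have pow : ∀ i, i ≤ r → (k - 1) ^ i ≤ (Tf i).card := by
      intro i
      induction i with
      | zero =>
        intro _
        simpa using Finset.card_pos.mpr ⟨v0, hv00⟩
      | succ i ih =>
        intro h
        calc (k - 1) ^ (i + 1) = (k - 1) * (k - 1) ^ i := by ring
          _ ≤ (k - 1) * (Tf i).card := Nat.mul_le_mul_left _ (ih (by omega))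
          _ ≤ (Tf (i + 1)).card := growth i h
    have hTr : n ≤ (Tf r).card :=
      le_trans (Nat.le_pow_clog (by omega) n) (pow r le_rfl)
    have hT0 : 1 ≤ (Tf 0).card := Finset.card_pos.mpr ⟨v0, hv00⟩
    have hdisj0r : Disjoint (Tf 0) (Tf r) := by
      rw [Finset.disjoint_left]
      intro w h0 hrr
      rw [memTf] at h0 hrr
      omega
    have hunion : (Tf 0).card + (Tf r).card = (Tf 0 ∪ Tf r).card :=
      (Finset.card_union_of_disjoint hdisj0r).symm
    have hle : (Tf 0 ∪ Tf r).card ≤ Fintype.card ↥H.verts := Finset.card_le_univ _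
    have hle2 : Fintype.card ↥H.verts ≤ n :=
      Fintype.card_le_of_injective Subtype.val Subtype.val_injective
    omega
  constructor
  · intro H hne
    by_contra h
    push_neg at h
    exact key H hne (fun v hv => by have := h v hv; omega)
  · rintro ⟨H, hne, hdeg⟩
    exact key H hne hdeg
end
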